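/- arXiv:1508.00406 — 3 statements merged into one kernel-verified Lean document; each statement's English description precedes it below -/
import Mathlib

section
/- Let D be the n-th Weyl algebra over ℂ (n ≥ 1), and let α₁,...,αₙ ∈ ℂ with α₁ ∉ {0, −1, −2, ...}. Let I = ∑ᵢ₌₁ⁿ D·(zᵢ∂ᵢ + αᵢ) be the left ideal generated by the operators zᵢ∂ᵢ + αᵢ. If m ∈ D satisfies z₁·m ∈ I, then m ∈ I. In other words, multiplication by z₁ is injective on the left D-module M = D/I. -/
/-!
The `n`-th Weyl algebra over `ℂ`, realized concretely as the subalgebra of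
`ℂ`-linear endomorphisms of the polynomial ring `ℂ[z₁,…,zₙ]` generated by the
multiplication operators `zᵢ` and the partial derivative operators `∂ᵢ`
(these satisfy `[∂ᵢ, zⱼ] = δᵢⱼ`, all other generators commuting).
-/

open MvPolynomial

set_option synthInstance.maxHeartbeats 1000000
set_option maxHeartbeats 1000000

/-- The multiplication operator `zᵢ`. -/
noncomputable def zEnd (n : ℕ) (i : Fin n) : Module.End ℂ (MvPolynomial (Fin n) ℂ) :=
  LinearMap.mulLeft ℂ (X i)

/-- The partial derivative operator `∂ᵢ`. -/
noncomputable def dEnd (n : ℕ) (i : Fin n) : Module.End ℂ (MvPolynomial (Fin n) ℂ) :=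
  (pderiv i).toLinearMap

/-- The `n`-th Weyl algebra `D = ℂ⟨z₁,…,zₙ,∂₁,…,∂ₙ⟩` over `ℂ`. -/
noncomputable def Weyl (n : ℕ) : Subalgebra ℂ (Module.End ℂ (MvPolynomial (Fin n) ℂ)) :=
  Algebra.adjoin ℂ (Set.range (zEnd n) ∪ Set.range (dEnd n))

noncomputable instance (n : ℕ) : Ring (Weyl n) := inferInstance
noncomputable instance (n : ℕ) : Algebra ℂ (Weyl n) := inferInstance

/-- The generator `zᵢ` as an element of the Weyl algebra. -/
noncomputable def zW (n : ℕ) (i : Fin n) : Weyl n :=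
  ⟨zEnd n i, Algebra.subset_adjoin (Or.inl ⟨i, rfl⟩)⟩

/-- The generator `∂ᵢ` as an element of the Weyl algebra. -/
noncomputable def dW (n : ℕ) (i : Fin n) : Weyl n :=
  ⟨dEnd n i, Algebra.subset_adjoin (Or.inr ⟨i, rfl⟩)⟩

namespace ZInj

variable {n : ℕ}

abbrev En (n : ℕ) := Module.End ℂ (MvPolynomial (Fin n) ℂ)

def dz (i0 i : Fin n) : ℤ := if i = i0 then 1 else 0
def dd (i0 i : Fin n) : ℤ := if i = i0 then -1 else 0

/-- Polynomials homogeneous of degree `d` in the variable `i0`. -/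
noncomputable def Pn (i0 : Fin n) (d : ℤ) : Submodule ℂ (MvPolynomial (Fin n) ℂ) where
  carrier := {f | ∀ a : Fin n →₀ ℕ, coeff a f ≠ 0 → (a i0 : ℤ) = d}
  add_mem' := by
    intro f g hf hg a ha
    by_cases h1 : coeff a f ≠ 0
    · exact hf a h1
    · push_neg at h1
      rw [coeff_add, h1, zero_add] at ha
      exact hg a ha
  zero_mem' := by intro a ha; simp at ha
  smul_mem' := by
    intro c f hf a ha
    apply hf a
    intro h
    rw [coeff_smul, h, smul_zero] at ha
    exact ha rfl

/-- Endomorphisms homogeneous of degree `k` w.r.t. the variable `i0`. -/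
noncomputable def Hs (i0 : Fin n) (k : ℤ) : Submodule ℂ (En n) where
  carrier := {P | ∀ d : ℤ, ∀ f ∈ Pn i0 d, P f ∈ Pn i0 (d + k)}
  add_mem' := by
    intro P Q hP hQ d f hf
    simpa using (Pn i0 (d + k)).add_mem (hP d f hf) (hQ d f hf)
  zero_mem' := by intro d f hf; simpa using (Pn i0 (d + k)).zero_mem
  smul_mem' := by
    intro c P hP d f hf
    simpa using (Pn i0 (d + k)).smul_mem c (hP d f hf)

lemma zEnd_apply (i : Fin n) (f : MvPolynomial (Fin n) ℂ) : zEnd n i f = X i * f := rfl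

lemma dEnd_apply (i : Fin n) (f : MvPolynomial (Fin n) ℂ) : dEnd n i f = pderiv i f := rfl

lemma endMul_apply (P Q : En n) (f : MvPolynomial (Fin n) ℂ) : (P * Q) f = P (Q f) := rfl

lemma one_mem_Hs (i0 : Fin n) : (1 : En n) ∈ Hs i0 0 := by
  intro d f hf
  simpa using hf

lemma mul_mem_Hs {i0 : Fin n} {P Q : En n} {k l : ℤ} (hP : P ∈ Hs i0 k) (hQ : Q ∈ Hs i0 l) :
    P * Q ∈ Hs i0 (k + l) := by
  intro d f hf
  rw [endMul_apply]
  have := hP (d + l) (Q f) (hQ d f hf)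
  rwa [show d + l + k = d + (k + l) by ring] at this

lemma zEnd_mem_Hs (i0 i : Fin n) : zEnd n i ∈ Hs i0 (dz i0 i) := by
  classical
  intro d f hf a ha
  have hXf : zEnd n i f = X i * f := rfl
  rw [hXf, coeff_X_mul'] at ha
  split_ifs at ha with hs
  · have h1 := hf _ ha
    have hai : 1 ≤ a i := by
      rw [Finsupp.mem_support_iff] at hs; omega
    by_cases hii : i = i0
    · subst hii
      rw [Finsupp.tsub_apply, Finsupp.single_eq_same] at h1
      have : ((a i - 1 : ℕ) : ℤ) = (a i : ℤ) - 1 := by omega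
      rw [this] at h1
      simp [dz]
      omega
    · rw [Finsupp.tsub_apply, Finsupp.single_eq_of_ne' hii, Nat.sub_zero] at h1
      simp [dz, hii, h1]
  · exact absurd rfl ha

lemma dEnd_mem_Hs (i0 i : Fin n) : dEnd n i ∈ Hs i0 (dd i0 i) := by
  classical
  intro d f hf
  have hrw : dEnd n i f = pderiv i f := rfl
  rw [hrw, f.as_sum, map_sum]
  apply Submodule.sum_mem
  intro v hv
  have hvd : (v i0 : ℤ) = d := hf v (by rwa [MvPolynomial.mem_support_iff] at hv)
  rw [pderiv_monomial]
  intro a ha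
  rw [coeff_monomial] at ha
  split_ifs at ha with he
  · subst he
    have hvi : v i ≠ 0 := by
      intro h0
      rw [h0] at ha
      simp at ha
    by_cases hii : i = i0
    · subst hii
      rw [Finsupp.tsub_apply, Finsupp.single_eq_same]
      simp [dd]
      omega
    · rw [Finsupp.tsub_apply, Finsupp.single_eq_of_ne' hii, Nat.sub_zero, hvd]
      simp [dd, hii]
  · exact absurd rfl ha

/-- commutation relations -/
lemma comm_zz (i j : Fin n) : zEnd n i * zEnd n j = zEnd n j * zEnd n i := by
  refine LinearMap.ext fun f => ?_
  rw [endMul_apply, endMul_apply, zEnd_apply, zEnd_apply, zEnd_apply, zEnd_apply]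
  ring

lemma comm_dz {i j : Fin n} (h : i ≠ j) : dEnd n i * zEnd n j = zEnd n j * dEnd n i := by
  refine LinearMap.ext fun f => ?_
  rw [endMul_apply, endMul_apply, zEnd_apply, dEnd_apply, dEnd_apply, zEnd_apply,
    pderiv_mul, pderiv_X_of_ne (Ne.symm h)]
  ring

lemma heis (i : Fin n) : dEnd n i * zEnd n i = zEnd n i * dEnd n i + 1 := by
  refine LinearMap.ext fun f => ?_
  rw [LinearMap.add_apply, endMul_apply, endMul_apply, zEnd_apply, dEnd_apply, dEnd_apply,
    zEnd_apply, pderiv_mul, pderiv_X_self, Module.End.one_apply]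
  ring

lemma comm_dd (i j : Fin n) : dEnd n i * dEnd n j = dEnd n j * dEnd n i := by
  classical
  refine LinearMap.ext fun f => ?_
  rw [endMul_apply, endMul_apply, dEnd_apply, dEnd_apply, dEnd_apply, dEnd_apply]
  induction f using MvPolynomial.induction_on' with
  | monomial a c =>
    by_cases hij : i = j
    · subst hij; rfl
    · simp only [pderiv_monomial]
      have he : a - Finsupp.single j 1 - Finsupp.single i 1
          = a - Finsupp.single i 1 - Finsupp.single j 1 := by
        ext t
        simp only [Finsupp.tsub_apply]
        omega
      rw [he, Finsupp.tsub_apply, Finsupp.single_eq_of_ne' (Ne.symm hij),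
        Finsupp.tsub_apply, Finsupp.single_eq_of_ne' hij, Nat.sub_zero, Nat.sub_zero]
      congr 1
      ring
  | add p q hp hq => simp [hp, hq]


/-- Words in the generators, with length bound `ℓ` and `i0`-degree `k`. -/
inductive W (i0 : Fin n) : ℕ → ℤ → En n → Prop
  | one : W i0 0 0 1
  | wz (i : Fin n) {ℓ : ℕ} {k : ℤ} {x : En n} : W i0 ℓ k x → W i0 (ℓ+1) (dz i0 i + k) (zEnd n i * x)
  | wd (i : Fin n) {ℓ : ℕ} {k : ℤ} {x : En n} : W i0 ℓ k x → W i0 (ℓ+1) (dd i0 i + k) (dEnd n i * x)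
  | weak {ℓ : ℕ} {k : ℤ} {x : En n} : W i0 ℓ k x → W i0 (ℓ+1) k x

noncomputable def Dl (i0 : Fin n) (ℓ : ℕ) (k : ℤ) : Submodule ℂ (En n) :=
  Submodule.span ℂ {x | W i0 ℓ k x}

noncomputable def Dk (i0 : Fin n) (k : ℤ) : Submodule ℂ (En n) :=
  Submodule.span ℂ {x | ∃ ℓ, W i0 ℓ k x}

lemma W_mem_Hs {i0 : Fin n} {ℓ : ℕ} {k : ℤ} {x : En n} (h : W i0 ℓ k x) : x ∈ Hs i0 k := by
  induction h with
  | one => exact one_mem_Hs i0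
  | wz i h ih => exact mul_mem_Hs (zEnd_mem_Hs i0 i) ih
  | wd i h ih => exact mul_mem_Hs (dEnd_mem_Hs i0 i) ih
  | weak h ih => exact ih

lemma Dk_le_Hs (i0 : Fin n) (k : ℤ) : Dk i0 k ≤ Hs i0 k := by
  rw [Dk, Submodule.span_le]
  rintro x ⟨ℓ, hx⟩
  exact W_mem_Hs hx

lemma W_mem_Weyl {i0 : Fin n} {ℓ : ℕ} {k : ℤ} {x : En n} (h : W i0 ℓ k x) : x ∈ Weyl n := by
  induction h with
  | one => exact one_mem (Weyl n)
  | wz i h ih => exact mul_mem (Algebra.subset_adjoin (Or.inl ⟨i, rfl⟩)) ih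
  | wd i h ih => exact mul_mem (Algebra.subset_adjoin (Or.inr ⟨i, rfl⟩)) ih
  | weak h ih => exact ih

lemma Dk_le_Weyl (i0 : Fin n) (k : ℤ) : Dk i0 k ≤ Subalgebra.toSubmodule (Weyl n) := by
  rw [Dk, Submodule.span_le]
  rintro x ⟨ℓ, hx⟩
  exact W_mem_Weyl hx

lemma mulW {i0 : Fin n} {ℓ m : ℕ} {k l : ℤ} {x y : En n} (hx : W i0 ℓ k x) (hy : W i0 m l y) :
    W i0 (ℓ + m) (k + l) (x * y) := by
  induction hx with
  | one => simpa using hy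
  | @wz i ℓ' k' x' h ih =>
      have h2 := W.wz (i0 := i0) i ih
      rw [mul_assoc, show ℓ' + 1 + m = ℓ' + m + 1 by omega,
        show dz i0 i + k' + l = dz i0 i + (k' + l) by omega]
      exact h2
  | @wd i ℓ' k' x' h ih =>
      have h2 := W.wd (i0 := i0) i ih
      rw [mul_assoc, show ℓ' + 1 + m = ℓ' + m + 1 by omega,
        show dd i0 i + k' + l = dd i0 i + (k' + l) by omega]
      exact h2
  | @weak ℓ' k' x' h ih =>
      rw [show ℓ' + 1 + m = ℓ' + m + 1 by omega]
      exact W.weak ih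

lemma Dl_mono {i0 : Fin n} {ℓ : ℕ} {k : ℤ} : Dl i0 ℓ k ≤ Dl i0 (ℓ+1) k := by
  rw [Dl, Submodule.span_le]
  exact fun x hx => Submodule.subset_span (W.weak hx)

lemma Dl_mono' {i0 : Fin n} {ℓ ℓ' : ℕ} (h : ℓ ≤ ℓ') {k : ℤ} : Dl i0 ℓ k ≤ Dl i0 ℓ' k := by
  induction h with
  | refl => exact le_rfl
  | step _ ih => exact le_trans ih Dl_mono

lemma Dl_le_Dk {i0 : Fin n} {ℓ : ℕ} {k : ℤ} : Dl i0 ℓ k ≤ Dk i0 k := by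
  rw [Dl, Dk, Submodule.span_le]
  exact fun x hx => Submodule.subset_span ⟨ℓ, hx⟩

lemma Dk_eq_iSup (i0 : Fin n) (k : ℤ) : Dk i0 k = ⨆ ℓ, Dl i0 ℓ k := by
  rw [Dk, show {x : En n | ∃ ℓ, W i0 ℓ k x} = ⋃ ℓ, {x | W i0 ℓ k x} by
    ext x; simp [Set.mem_iUnion], Submodule.span_iUnion]
  rfl

lemma exists_Dl {i0 : Fin n} {k : ℤ} {x : En n} (hx : x ∈ Dk i0 k) : ∃ ℓ, x ∈ Dl i0 ℓ k := by
  rw [Dk_eq_iSup] at hx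
  have hdir : Directed (· ≤ ·) (fun ℓ => Dl i0 ℓ k) :=
    Monotone.directed_le fun a b hab => Dl_mono' hab
  exact (Submodule.mem_iSup_of_directed _ hdir).1 hx

lemma z_mul_Dl {i0 : Fin n} (i : Fin n) {ℓ : ℕ} {k : ℤ} {x : En n} (hx : x ∈ Dl i0 ℓ k) :
    zEnd n i * x ∈ Dl i0 (ℓ+1) (dz i0 i + k) := by
  have h : Dl i0 ℓ k ≤ (Dl i0 (ℓ+1) (dz i0 i + k)).comap (LinearMap.mulLeft ℂ (zEnd n i)) := by
    rw [Dl, Submodule.span_le]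
    intro y hy
    exact Submodule.subset_span (W.wz i hy)
  exact h hx

lemma d_mul_Dl {i0 : Fin n} (i : Fin n) {ℓ : ℕ} {k : ℤ} {x : En n} (hx : x ∈ Dl i0 ℓ k) :
    dEnd n i * x ∈ Dl i0 (ℓ+1) (dd i0 i + k) := by
  have h : Dl i0 ℓ k ≤ (Dl i0 (ℓ+1) (dd i0 i + k)).comap (LinearMap.mulLeft ℂ (dEnd n i)) := by
    rw [Dl, Submodule.span_le]
    intro y hy
    exact Submodule.subset_span (W.wd i hy)
  exact h hx

lemma d_mul_Dk {i0 : Fin n} (i : Fin n) {k : ℤ} {x : En n} (hx : x ∈ Dk i0 k) :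
    dEnd n i * x ∈ Dk i0 (dd i0 i + k) := by
  obtain ⟨ℓ, hx⟩ := exists_Dl hx
  exact Dl_le_Dk (d_mul_Dl i hx)

lemma z_mul_Dk {i0 : Fin n} (i : Fin n) {k : ℤ} {x : En n} (hx : x ∈ Dk i0 k) :
    zEnd n i * x ∈ Dk i0 (dz i0 i + k) := by
  obtain ⟨ℓ, hx⟩ := exists_Dl hx
  exact Dl_le_Dk (z_mul_Dl i hx)

lemma Dk_mul {i0 : Fin n} {k l : ℤ} {x y : En n} (hx : x ∈ Dk i0 k) (hy : y ∈ Dk i0 l) :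
    x * y ∈ Dk i0 (k + l) := by
  have h : Dk i0 k * Dk i0 l ≤ Dk i0 (k + l) := by
    rw [Dk, Dk, Submodule.span_mul_span, Dk, Submodule.span_le]
    rintro z hz
    rw [Set.mem_mul] at hz
    obtain ⟨a, ⟨ℓa, ha⟩, b, ⟨ℓb, hb⟩, rfl⟩ := hz
    exact Submodule.subset_span ⟨ℓa + ℓb, mulW ha hb⟩
  exact h (Submodule.mul_mem_mul hx hy)

/-- θ = z₁∂₁ -/
noncomputable def th (i0 : Fin n) : En n := zEnd n i0 * dEnd n i0

lemma th_comm_z (i0 i : Fin n) :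
    th i0 * zEnd n i = zEnd n i * th i0 + (dz i0 i : ℂ) • zEnd n i := by
  by_cases hii : i = i0
  · rw [hii, th, dz, if_pos rfl, mul_assoc, heis i0, mul_add, mul_one, ← mul_assoc]
    push_cast
    rw [one_smul]
  · rw [th, dz, if_neg hii]
    push_cast
    rw [zero_smul, add_zero, mul_assoc, comm_dz (fun h => hii h.symm), ← mul_assoc,
      comm_zz i0 i, mul_assoc]

lemma th_comm_d (i0 i : Fin n) :
    th i0 * dEnd n i = dEnd n i * th i0 + (dd i0 i : ℂ) • dEnd n i := by
  by_cases hii : i = i0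
  · rw [hii, th, dd, if_pos rfl]
    have h1 : dEnd n i0 * (zEnd n i0 * dEnd n i0)
        = zEnd n i0 * dEnd n i0 * dEnd n i0 + dEnd n i0 := by
      rw [← mul_assoc, heis i0, add_mul, one_mul]
    rw [h1]
    have h2 : ((-1 : ℤ) : ℂ) • dEnd n i0 = -dEnd n i0 := by
      push_cast
      exact neg_one_smul ℂ (dEnd n i0)
    rw [h2]
    abel
  · rw [th, dd, if_neg hii]
    push_cast
    rw [zero_smul, add_zero, mul_assoc, comm_dd i0 i, ← mul_assoc, ← comm_dz hii, mul_assoc]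

lemma th_comm_W {i0 : Fin n} {ℓ : ℕ} {k : ℤ} {x : En n} (h : W i0 ℓ k x) :
    th i0 * x = x * th i0 + (k : ℂ) • x := by
  induction h with
  | one => simp
  | @wz i ℓ' k' x' h ih =>
      rw [← mul_assoc, th_comm_z i0 i, add_mul, mul_assoc, ih, smul_mul_assoc]
      push_cast
      rw [add_smul, mul_add, mul_smul_comm, mul_assoc]
      abel
  | @wd i ℓ' k' x' h ih =>
      rw [← mul_assoc, th_comm_d i0 i, add_mul, mul_assoc, ih, smul_mul_assoc]
      push_cast
      rw [add_smul, mul_add, mul_smul_comm, mul_assoc]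
      abel
  | weak h ih => exact ih

lemma th_comm_Dk {i0 : Fin n} {k : ℤ} {x : En n} (hx : x ∈ Dk i0 k) :
    th i0 * x = x * th i0 + (k : ℂ) • x := by
  let C : Submodule ℂ (En n) :=
    { carrier := {y | th i0 * y = y * th i0 + (k : ℂ) • y}
      add_mem' := by
        intro a b ha hb
        show th i0 * (a + b) = (a + b) * th i0 + (k : ℂ) • (a + b)
        rw [mul_add, ha, hb, add_mul, smul_add]
        abel
      zero_mem' := by
        show th i0 * 0 = 0 * th i0 + (k : ℂ) • (0 : En n)
        simp
      smul_mem' := by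
        intro c a ha
        show th i0 * (c • a) = (c • a) * th i0 + (k : ℂ) • (c • a)
        rw [mul_smul_comm, ha, smul_add, smul_mul_assoc, smul_comm] }
  have hle : Dk i0 k ≤ C := by
    rw [Dk, Submodule.span_le]
    rintro y ⟨ℓ, hy⟩
    exact th_comm_W hy
  exact hle hx

/-- Factorization: elements of positive degree factor as `z₁ ⬝ (lower degree)`. -/
lemma factor_Dl {i0 : Fin n} : ∀ ℓ : ℕ, ∀ k : ℤ, 1 ≤ k →
    Dl i0 ℓ k ≤ Submodule.map (LinearMap.mulLeft ℂ (zEnd n i0)) (Dl i0 ℓ (k-1)) := by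
  intro ℓ
  induction ℓ using Nat.strong_induction_on with
  | _ ℓ IH =>
    intro k hk
    rw [Dl, Submodule.span_le]
    intro x hx
    have hx' : W i0 ℓ k x := hx
    clear hx
    rw [SetLike.mem_coe, Submodule.mem_map]
    cases hx' with
    | one => omega
    | @wz i ℓ' k' x' h =>
        by_cases hii : i = i0
        · have hdz : dz i0 i = 1 := by rw [dz, if_pos hii]
          refine ⟨x', ?_, ?_⟩
          · rw [show dz i0 i + k' - 1 = k' by omega]
            exact Dl_mono (Submodule.subset_span h)
          · rw [LinearMap.mulLeft_apply, hii]
        · have hdz : dz i0 i = 0 := by rw [dz, if_neg hii]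
          have hk' : 1 ≤ k' := by omega
          obtain ⟨y, hy, hxy⟩ := Submodule.mem_map.mp
            (IH ℓ' (by omega) k' hk' (Submodule.subset_span h))
          rw [LinearMap.mulLeft_apply] at hxy
          refine ⟨zEnd n i * y, ?_, ?_⟩
          · rw [show dz i0 i + k' - 1 = dz i0 i + (k' - 1) by omega]
            exact z_mul_Dl i hy
          · rw [LinearMap.mulLeft_apply, ← hxy, ← mul_assoc, ← mul_assoc, comm_zz i0 i]
    | @wd i ℓ' k' x' h =>
        by_cases hii : i = i0
        · have hdd : dd i0 i = -1 := by rw [dd, if_pos hii]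
          have hk' : 1 ≤ k' := by omega
          obtain ⟨y, hy, hxy⟩ := Submodule.mem_map.mp
            (IH ℓ' (by omega) k' hk' (Submodule.subset_span h))
          rw [LinearMap.mulLeft_apply] at hxy
          have hy1 : dEnd n i0 * y ∈ Dl i0 (ℓ'+1) (dd i0 i + k' - 1) := by
            have h2 := d_mul_Dl (i0 := i0) i0 hy
            have h3 : dd i0 i0 = -1 := by rw [dd, if_pos rfl]
            rw [show dd i0 i + k' - 1 = dd i0 i0 + (k' - 1) by omega]
            exact h2
          have hk1 : 1 ≤ k' - 1 := by omega
          obtain ⟨w, hw, hwy⟩ := Submodule.mem_map.mp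
            (IH ℓ' (by omega) (k' - 1) hk1 hy)
          rw [LinearMap.mulLeft_apply] at hwy
          have hw' : w ∈ Dl i0 (ℓ'+1) (dd i0 i + k' - 1) := by
            rw [show dd i0 i + k' - 1 = k' - 1 - 1 by omega]
            exact Dl_mono hw
          refine ⟨dEnd n i0 * y + w, Submodule.add_mem _ hy1 hw', ?_⟩
          rw [LinearMap.mulLeft_apply, hii, ← hxy, mul_add, hwy, ← mul_assoc, ← mul_assoc,
            heis i0, add_mul, one_mul]
        · have hdd : dd i0 i = 0 := by rw [dd, if_neg hii]
          have hk' : 1 ≤ k' := by omega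
          obtain ⟨y, hy, hxy⟩ := Submodule.mem_map.mp
            (IH ℓ' (by omega) k' hk' (Submodule.subset_span h))
          rw [LinearMap.mulLeft_apply] at hxy
          refine ⟨dEnd n i * y, ?_, ?_⟩
          · rw [show dd i0 i + k' - 1 = dd i0 i + (k' - 1) by omega]
            exact d_mul_Dl i hy
          · rw [LinearMap.mulLeft_apply, ← hxy, ← mul_assoc, ← mul_assoc, ← comm_dz hii]
    | @weak ℓ' k'' x'' h =>
        obtain ⟨y, hy, hxy⟩ := Submodule.mem_map.mp
          (IH ℓ' (by omega) k hk (Submodule.subset_span h))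
        exact ⟨y, Dl_mono hy, hxy⟩
lemma factor_Dk {i0 : Fin n} {k : ℤ} (hk : 1 ≤ k) {x : En n} (hx : x ∈ Dk i0 k) :
    ∃ y, y ∈ Dk i0 (k-1) ∧ x = zEnd n i0 * y := by
  obtain ⟨ℓ, hx⟩ := exists_Dl hx
  obtain ⟨y, hy, hxy⟩ := factor_Dl ℓ k hk hx
  exact ⟨y, Dl_le_Dk hy, hxy.symm⟩

lemma monomial_mem_Pn (i0 : Fin n) (a : Fin n →₀ ℕ) (c : ℂ) :
    (monomial a c : MvPolynomial (Fin n) ℂ) ∈ Pn i0 (a i0) := by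
  intro b hb
  rw [coeff_monomial] at hb
  split_ifs at hb with he
  · rw [he]
  · exact absurd rfl hb

/-- Independence of the graded components. -/
lemma indep (i0 : Fin n) (T : Finset ℤ) (A : ℤ → En n)
    (hA : ∀ k ∈ T, A k ∈ Hs i0 k) (hsum : ∑ k ∈ T, A k = 0) :
    ∀ k ∈ T, A k = 0 := by
  intro k0 hk0
  have key : ∀ a : Fin n →₀ ℕ, ∀ c : ℂ, A k0 (monomial a c) = 0 := by
    intro a c
    have hmon : (monomial a c : MvPolynomial (Fin n) ℂ) ∈ Pn i0 (a i0) :=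
      monomial_mem_Pn i0 a c
    have hsum' : ∑ k ∈ T, A k (monomial a c) = 0 := by
      rw [← LinearMap.sum_apply, hsum]
      rfl
    ext b
    rw [coeff_zero]
    by_cases hb : (b i0 : ℤ) = (a i0 : ℤ) + k0
    · have hz : ∀ k ∈ T, k ≠ k0 → coeff b (A k (monomial a c)) = 0 := by
        intro k hk hkne
        by_contra hc
        have := hA k hk _ _ hmon b hc
        omega
      have h1 : ∑ k ∈ T, coeff b (A k (monomial a c)) = 0 := by
        rw [← coeff_sum, hsum', coeff_zero]
      rwa [Finset.sum_eq_single k0 hz (fun h => absurd hk0 h)] at h1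
    · by_contra hc
      have := hA k0 hk0 _ _ hmon b hc
      omega
  refine LinearMap.ext fun f => ?_
  rw [LinearMap.zero_apply]
  induction f using MvPolynomial.induction_on' with
  | monomial a c => exact key a c
  | add p q hp hq => rw [map_add, hp, hq, add_zero]

/-- Decomposition of Weyl algebra elements into graded components. -/
lemma decomp (i0 : Fin n) {x : En n} (hx : x ∈ Weyl n) :
    ∃ c : ℤ →₀ En n, (∀ k, c k ∈ Dk i0 k) ∧ (c.sum fun _ v => v) = x := by
  have hx2 : x ∈ Submodule.span ℂ
      (Submonoid.closure (Set.range (zEnd n) ∪ Set.range (dEnd n)) : Set (En n)) := by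
    rw [← Algebra.adjoin_eq_span]
    exact hx
  have hle : Submodule.span ℂ
      (Submonoid.closure (Set.range (zEnd n) ∪ Set.range (dEnd n)) : Set (En n))
      ≤ ⨆ k : ℤ, Dk i0 k := by
    rw [Submodule.span_le]
    intro y hy
    have hy' : ∃ ℓ k, W i0 ℓ k y := by
      induction hy using Submonoid.closure_induction with
      | mem z hz =>
          rcases hz with ⟨i, rfl⟩ | ⟨i, rfl⟩
          · exact ⟨1, dz i0 i, by simpa using W.wz (i0 := i0) i W.one⟩
          · exact ⟨1, dd i0 i, by simpa using W.wd (i0 := i0) i W.one⟩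
      | one => exact ⟨0, 0, W.one⟩
      | mul a b _ _ iha ihb =>
          obtain ⟨ℓa, ka, ha⟩ := iha
          obtain ⟨ℓb, kb, hb⟩ := ihb
          exact ⟨ℓa + ℓb, ka + kb, mulW ha hb⟩
    obtain ⟨ℓ, k, hw⟩ := hy'
    exact Submodule.mem_iSup_of_mem k (Submodule.subset_span ⟨ℓ, hw⟩)
  exact (Submodule.mem_iSup_iff_exists_finsupp _ _).1 (hle hx2)

lemma z_cancel (i : Fin n) {P Q : En n} (h : zEnd n i * P = zEnd n i * Q) : P = Q := by
  refine LinearMap.ext fun f => ?_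
  have h2 : zEnd n i (P f) = zEnd n i (Q f) := by
    rw [← endMul_apply, ← endMul_apply, h]
  rw [zEnd_apply, zEnd_apply] at h2
  exact mul_left_cancel₀ (MvPolynomial.X_ne_zero i) h2

lemma gE_mem_Dk (i0 : Fin n) (α : Fin n → ℂ) (i : Fin n) :
    zEnd n i * dEnd n i + algebraMap ℂ (En n) (α i) ∈ Dk i0 0 := by
  refine Submodule.add_mem _ ?_ ?_
  · have h1 : W i0 2 (dz i0 i + (dd i0 i + 0)) (zEnd n i * (dEnd n i * 1)) :=
      W.wz i (W.wd i W.one)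
    rw [mul_one] at h1
    rw [show dz i0 i + (dd i0 i + 0) = 0 by by_cases h : i = i0 <;> simp [dz, dd, h]] at h1
    exact Submodule.subset_span ⟨2, h1⟩
  · rw [Algebra.algebraMap_eq_smul_one]
    exact Submodule.smul_mem _ _ (Submodule.subset_span ⟨0, W.one⟩)

lemma main (n : ℕ) (hn : 0 < n) (α : Fin n → ℂ)
    (hα : ∀ k : ℕ, α ⟨0, hn⟩ ≠ -(k : ℂ)) (m : Weyl n)
    (hm : zW n ⟨0, hn⟩ * m ∈ Submodule.span (Weyl n)
      (Set.range fun i => zW n i * dW n i + algebraMap ℂ (Weyl n) (α i))) :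
    m ∈ Submodule.span (Weyl n)
      (Set.range fun i => zW n i * dW n i + algebraMap ℂ (Weyl n) (α i)) := by
  classical
  set i0 : Fin n := ⟨0, hn⟩ with hi0def
  set gE : Fin n → En n := fun i => zEnd n i * dEnd n i + algebraMap ℂ (En n) (α i) with hgE
  set gW : Fin n → Weyl n := fun i => zW n i * dW n i + algebraMap ℂ (Weyl n) (α i) with hgW
  have coe_gW : ∀ i, ((gW i : Weyl n) : En n) = gE i := fun i => rfl
  obtain ⟨c, hc⟩ := (Submodule.mem_span_range_iff_exists_fun _).mp hm
  have hc' : ∑ i, (c i : En n) * gE i = zEnd n i0 * (m : En n) := by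
    have h1 := congrArg (Subtype.val) hc
    rw [AddSubmonoidClass.coe_finset_sum] at h1
    have h2 : ∀ i : Fin n, ((c i • gW i : Weyl n) : En n) = (c i : En n) * gE i := by
      intro i
      rw [smul_eq_mul]
      exact congrArg (· * gE i) rfl
    rw [Finset.sum_congr rfl fun i _ => h2 i] at h1
    exact h1
  obtain ⟨cm, hcm, hcmsum⟩ := decomp i0 m.2
  choose q hq hqsum using fun i : Fin n => decomp i0 (c i).2
  set T : Finset ℤ := cm.support.image (· + 1) ∪ Finset.univ.biUnion (fun i => (q i).support)
    with hT
  set A : ℤ → En n := fun k => zEnd n i0 * cm (k - 1) - ∑ i, q i k * gE i with hA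
  have hdz0 : dz i0 i0 = 1 := by rw [dz, if_pos rfl]
  have hAmem : ∀ k : ℤ, A k ∈ Hs i0 k := by
    intro k
    apply Dk_le_Hs
    refine Submodule.sub_mem _ ?_ (Submodule.sum_mem _ fun i _ => ?_)
    · have h1 := z_mul_Dk (i0 := i0) i0 (hcm (k - 1))
      rwa [hdz0, show 1 + (k - 1) = k by ring] at h1
    · have h2 := Dk_mul (hq i k) (gE_mem_Dk i0 α i)
      rwa [add_zero] at h2
  have hT1 : ∀ j ∈ cm.support, j + 1 ∈ T :=
    fun j hj => Finset.mem_union_left _ (Finset.mem_image_of_mem _ hj)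
  have hT2 : ∀ i : Fin n, (q i).support ⊆ T :=
    fun i k hk => Finset.mem_union_right _ (Finset.mem_biUnion.mpr ⟨i, Finset.mem_univ i, hk⟩)
  have hS1 : ∑ k ∈ T, cm (k - 1) = (m : En n) := by
    have himg : ∑ k ∈ T, cm (k - 1) = ∑ j ∈ T.image (fun k => k - 1), cm j :=
      (Finset.sum_image (fun x _ y _ h => by omega)).symm
    rw [himg, ← hcmsum]
    refine (Finset.sum_subset ?_ ?_).symm
    · intro j hj
      rw [Finset.mem_image]
      exact ⟨j + 1, hT1 j hj, by omega⟩
    · intro j _ hj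
      exact Finsupp.notMem_support_iff.mp hj
  have hS2 : ∀ i : Fin n, ∑ k ∈ T, q i k = (c i : En n) := by
    intro i
    rw [← hqsum i]
    refine (Finset.sum_subset (hT2 i) ?_).symm
    intro j _ hj
    exact Finsupp.notMem_support_iff.mp hj
  have hsumA : ∑ k ∈ T, A k = 0 := by
    have e1 : ∑ k ∈ T, (zEnd n i0 * cm (k - 1)) = zEnd n i0 * (m : En n) := by
      rw [← Finset.mul_sum, hS1]
    have e2 : ∑ k ∈ T, (∑ i, q i k * gE i) = zEnd n i0 * (m : En n) := by
      rw [Finset.sum_comm]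
      rw [Finset.sum_congr rfl fun i _ => by rw [← Finset.sum_mul, hS2 i]]
      exact hc'
    simp only [hA]
    rw [Finset.sum_sub_distrib, e1, e2, sub_self]
  have hA0 := indep i0 T A (fun k _ => hAmem k) hsumA
  have key : ∀ j : ℤ, ∃ r : Fin n → Weyl n, cm j = ∑ i, (r i : En n) * gE i := by
    intro j
    by_cases hjs : j ∈ cm.support
    · have hkT : j + 1 ∈ T := hT1 j hjs
      have heq : zEnd n i0 * cm j = ∑ i, q i (j + 1) * gE i := by
        have h0 := hA0 (j + 1) hkT
        rw [hA] at h0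
        simp only [show j + 1 - 1 = j by ring] at h0
        exact sub_eq_zero.mp h0
      by_cases hj : 0 ≤ j
      · have hfac : ∀ i : Fin n, ∃ y, y ∈ Dk i0 j ∧ q i (j + 1) = zEnd n i0 * y := by
          intro i
          have h3 := factor_Dk (k := j + 1) (by omega) (hq i (j + 1))
          rwa [show j + 1 - 1 = j by ring] at h3
        choose y hy hyz using hfac
        have heq2 : zEnd n i0 * cm j = zEnd n i0 * ∑ i, y i * gE i := by
          rw [heq, Finset.mul_sum]
          exact Finset.sum_congr rfl fun i _ => by rw [hyz i, mul_assoc]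
        exact ⟨fun i => ⟨y i, Dk_le_Weyl i0 j (hy i)⟩, z_cancel i0 heq2⟩
      · set u : En n := cm j with hu
        have huD : u ∈ Dk i0 j := hcm j
        have hth : th i0 * u = u * th i0 + (j : ℂ) • u := th_comm_Dk huD
        have heq3 : dEnd n i0 * (zEnd n i0 * u) = ∑ i, (dEnd n i0 * q i (j + 1)) * gE i := by
          rw [heq, Finset.mul_sum]
          exact Finset.sum_congr rfl fun i _ => (mul_assoc _ _ _).symm
        have hlhs : dEnd n i0 * (zEnd n i0 * u) = u * th i0 + ((j : ℂ) + 1) • u := by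
          rw [← mul_assoc, heis i0, add_mul, one_mul, ← th, hth, add_smul, one_smul]
          abel
        have hth_g : u * th i0 = u * gE i0 - α i0 • u := by
          have hg0 : gE i0 = th i0 + algebraMap ℂ (En n) (α i0) := rfl
          rw [hg0, mul_add, ← Algebra.commutes, ← Algebra.smul_def, add_sub_cancel_right]
        set s : ℂ := α i0 - ((j : ℂ) + 1) with hs_def
        have hs : s ≠ 0 := by
          intro h0
          apply hα (-(j + 1)).toNat
          have h3 : (((-(j + 1)).toNat : ℕ) : ℂ) = -((j : ℂ) + 1) := by
            have h4 : ((-(j + 1)).toNat : ℤ) = -(j + 1) := by omega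
            calc (((-(j + 1)).toNat : ℕ) : ℂ) = (((-(j + 1)).toNat : ℤ) : ℂ) := by push_cast; ring
              _ = ((-(j + 1) : ℤ) : ℂ) := by rw [h4]
              _ = -((j : ℂ) + 1) := by push_cast; ring
          rw [h3, neg_neg]
          rw [hs_def] at h0
          linear_combination h0
        have hmain : s • u = u * gE i0 - ∑ i, (dEnd n i0 * q i (j + 1)) * gE i := by
          rw [← heq3, hlhs, hth_g, hs_def]
          module
        refine ⟨fun i => ⟨s⁻¹ • ((if i = i0 then u else 0) - dEnd n i0 * q i (j + 1)), ?_⟩, ?_⟩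
        · refine Subalgebra.smul_mem _ (sub_mem ?_ ?_) _
          · by_cases hii : i = i0
            · rw [if_pos hii]
              exact Dk_le_Weyl i0 j huD
            · rw [if_neg hii]
              exact zero_mem _
          · exact mul_mem (Algebra.subset_adjoin (Or.inr ⟨i0, rfl⟩))
              (Dk_le_Weyl i0 (j + 1) (hq i (j + 1)))
        · show cm j = ∑ i, (s⁻¹ • ((if i = i0 then u else 0) - dEnd n i0 * q i (j + 1))) * gE i
          have hcomp : ∑ i, (s⁻¹ • ((if i = i0 then u else 0) - dEnd n i0 * q i (j + 1))) * gE i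
              = s⁻¹ • (u * gE i0 - ∑ i, (dEnd n i0 * q i (j + 1)) * gE i) := by
            simp only [smul_mul_assoc, sub_mul, ite_mul, zero_mul]
            rw [← Finset.smul_sum, Finset.sum_sub_distrib, Finset.sum_ite_eq' Finset.univ i0]
            simp
          rw [hcomp, ← hmain, smul_smul, inv_mul_cancel₀ hs, one_smul, hu]
    · refine ⟨0, ?_⟩
      rw [Finsupp.notMem_support_iff.mp hjs]
      simp
  choose r hr using key
  have hmsum : (m : En n) = ∑ i, ((∑ j ∈ cm.support, r j i : Weyl n) : En n) * gE i := by
    calc (m : En n) = cm.sum fun _ v => v := hcmsum.symm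
      _ = ∑ j ∈ cm.support, cm j := rfl
      _ = ∑ j ∈ cm.support, ∑ i, (r j i : En n) * gE i :=
          Finset.sum_congr rfl fun j _ => hr j
      _ = ∑ i, ∑ j ∈ cm.support, (r j i : En n) * gE i := Finset.sum_comm
      _ = ∑ i, (∑ j ∈ cm.support, (r j i : En n)) * gE i :=
          Finset.sum_congr rfl fun i _ => (Finset.sum_mul _ _ _).symm
      _ = ∑ i, ((∑ j ∈ cm.support, r j i : Weyl n) : En n) * gE i := by
          refine Finset.sum_congr rfl fun i _ => ?_
          rw [AddSubmonoidClass.coe_finset_sum]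
  refine (Submodule.mem_span_range_iff_exists_fun _).mpr ⟨fun i => ∑ j ∈ cm.support, r j i, ?_⟩
  apply Subtype.ext
  rw [AddSubmonoidClass.coe_finset_sum]
  have hterm : ∀ i : Fin n, (((∑ j ∈ cm.support, r j i) • gW i : Weyl n) : En n)
      = ((∑ j ∈ cm.support, r j i : Weyl n) : En n) * gE i := by
    intro i
    rw [smul_eq_mul]
    rfl
  rw [Finset.sum_congr rfl fun i _ => hterm i]
  exact hmsum.symm

end ZInj


set_option maxHeartbeats 10000000
set_option synthInstance.maxHeartbeats 10000000

/-- Let `α₁,…,αₙ ∈ ℂ` with `α₁ ∉ {0,−1,−2,…}`, and let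
`I = ∑ᵢ D·(zᵢ∂ᵢ + αᵢ)` be the left ideal generated by the `zᵢ∂ᵢ + αᵢ`.
If `z₁·m ∈ I` then `m ∈ I`; in other words, multiplication by `z₁` is injective
on the left `D`-module `M = D/I`. -/
theorem z_mul_mem_ideal (n : ℕ) (hn : 0 < n) (α : Fin n → ℂ)
    (hα : ∀ k : ℕ, α ⟨0, hn⟩ ≠ -(k : ℂ)) :
    (∀ m : Weyl n,
        zW n ⟨0, hn⟩ * m ∈ Submodule.span (Weyl n)
            (Set.range fun i => zW n i * dW n i + algebraMap ℂ (Weyl n) (α i)) →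
        m ∈ Submodule.span (Weyl n)
            (Set.range fun i => zW n i * dW n i + algebraMap ℂ (Weyl n) (α i))) ∧
    Function.Injective
      (fun m : Weyl n ⧸ Submodule.span (Weyl n)
          (Set.range fun i => zW n i * dW n i + algebraMap ℂ (Weyl n) (α i)) =>
        zW n ⟨0, hn⟩ • m) := by
  have hmain : ∀ m : Weyl n,
      zW n ⟨0, hn⟩ * m ∈ Submodule.span (Weyl n)
          (Set.range fun i => zW n i * dW n i + algebraMap ℂ (Weyl n) (α i)) →
      m ∈ Submodule.span (Weyl n)
          (Set.range fun i => zW n i * dW n i + algebraMap ℂ (Weyl n) (α i)) :=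
    fun m hm => ZInj.main n hn α hα m hm
  refine ⟨hmain, ?_⟩
  intro a b hab
  obtain ⟨x, rfl⟩ := Submodule.Quotient.mk_surjective _ a
  obtain ⟨y, rfl⟩ := Submodule.Quotient.mk_surjective _ b
  have hab' : Submodule.Quotient.mk (p := Submodule.span (Weyl n)
        (Set.range fun i => zW n i * dW n i + algebraMap ℂ (Weyl n) (α i)))
        (zW n ⟨0, hn⟩ • x)
      = Submodule.Quotient.mk (zW n ⟨0, hn⟩ • y) := by
    rw [Submodule.Quotient.mk_smul, Submodule.Quotient.mk_smul]
    exact hab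
  rw [Submodule.Quotient.eq] at hab'
  rw [Submodule.Quotient.eq]
  refine hmain (x - y) ?_
  rw [mul_sub]
  simpa [smul_eq_mul] using hab'
end

section
/- Let D be the first Weyl algebra over ℂ with generators z, ∂, relation [∂,z] = 1, and let α ∈ ℂ with α ∉ {0,−1,−2,...}. Then the left D-module M = D/D·(z∂ + α) has no z-torsion: if m ∈ M satisfies z·m = 0 then m = 0. -/
/-!
The `n`-th Weyl algebra over `ℂ`, realized concretely as the subalgebra of
`ℂ`-linear endomorphisms of the polynomial ring `ℂ[z₁,…,zₙ]` generated by the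
multiplication operators `zᵢ` and the partial derivative operators `∂ᵢ`
(these satisfy `[∂ᵢ, zⱼ] = δᵢⱼ`, all other generators commuting).
-/

open MvPolynomial

set_option synthInstance.maxHeartbeats 1000000
set_option maxHeartbeats 1000000

namespace NoZTorAux

noncomputable section

abbrev PP : Type := MvPolynomial (Fin 1) ℂ
abbrev EE : Type := Module.End ℂ PP

def zz : EE := zEnd 1 0
def dd : EE := dEnd 1 0

lemma mul_apply' (f g : EE) (p : PP) : (f * g) p = f (g p) := rfl

lemma zz_apply (p : PP) : zz p = X 0 * p := rfl
lemma dd_apply (p : PP) : dd p = pderiv 0 p := rfl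

lemma zz_mem : zz ∈ Weyl 1 := (zW 1 0).2
lemma dd_mem : dd ∈ Weyl 1 := (dW 1 0).2

lemma mulLeft_C (c : ℂ) : LinearMap.mulLeft ℂ (C c : PP) = algebraMap ℂ EE c := by
  ext q
  simp [Module.algebraMap_end_apply, C_mul']

lemma mulLeft_add' (p q : PP) :
    LinearMap.mulLeft ℂ (p + q) = LinearMap.mulLeft ℂ p + LinearMap.mulLeft ℂ q := by
  ext r; simp [add_mul]

lemma mulLeft_smul' (c : ℂ) (p : PP) :
    LinearMap.mulLeft ℂ (c • p) = c • LinearMap.mulLeft ℂ p := by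
  ext r; simp [smul_mul_assoc]

lemma mulLeft_zero' : LinearMap.mulLeft ℂ (0 : PP) = 0 := by
  ext r; simp

lemma mulLeft_mulLeft (p q : PP) :
    LinearMap.mulLeft ℂ p * LinearMap.mulLeft ℂ q = LinearMap.mulLeft ℂ (p * q) := by
  rw [LinearMap.mulLeft_mul]; rfl

lemma mulLeft_mem (p : PP) : LinearMap.mulLeft ℂ p ∈ Weyl 1 := by
  have h1 : p ∈ Algebra.adjoin ℂ (Set.range (X : Fin 1 → PP)) := by
    rw [MvPolynomial.adjoin_range_X]; trivial
  induction h1 using Algebra.adjoin_induction with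
  | mem x hx =>
      obtain ⟨i, rfl⟩ := hx
      rw [show (i : Fin 1) = 0 from Subsingleton.elim _ _]
      exact zz_mem
  | algebraMap c =>
      rw [show (algebraMap ℂ PP c) = C c from rfl, mulLeft_C]
      exact Subalgebra.algebraMap_mem _ _
  | add x y hx hy ihx ihy => rw [mulLeft_add']; exact add_mem ihx ihy
  | mul x y hx hy ihx ihy => rw [← mulLeft_mulLeft]; exact mul_mem ihx ihy

lemma dd_mulLeft (p : PP) :
    dd * LinearMap.mulLeft ℂ p =
      LinearMap.mulLeft ℂ p * dd + LinearMap.mulLeft ℂ (pderiv 0 p) := by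
  refine LinearMap.ext fun q => ?_
  show pderiv 0 (p * q) = p * pderiv 0 q + pderiv 0 p * q
  rw [pderiv_mul]; ring

open Finset in
def Rep (b : EE) : Prop :=
  ∃ (J : ℕ) (p : ℕ → PP),
    b = ∑ j ∈ Finset.range (J + 1), LinearMap.mulLeft ℂ (p j) * dd ^ j

lemma rep_extend {b : EE} {J : ℕ} {p : ℕ → PP}
    (hb : b = ∑ j ∈ Finset.range (J + 1), LinearMap.mulLeft ℂ (p j) * dd ^ j)
    {L : ℕ} (hJL : J ≤ L) :
    ∃ q : ℕ → PP,
      b = ∑ j ∈ Finset.range (L + 1), LinearMap.mulLeft ℂ (q j) * dd ^ j := by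
  refine ⟨fun j => if j ≤ J then p j else 0, ?_⟩
  rw [hb, ← Finset.sum_subset
    (Finset.range_subset_range.2 (Nat.succ_le_succ hJL) : Finset.range (J+1) ⊆ Finset.range (L+1))]
  · exact Finset.sum_congr rfl fun j hj => by
      simp [Nat.lt_succ_iff.mp (Finset.mem_range.mp hj)]
  · intro x hx hxn
    have hx' : ¬ x ≤ J := fun h => hxn (Finset.mem_range.mpr (Nat.lt_succ_of_le h))
    simp [hx', mulLeft_zero']

lemma Rep.add {a b : EE} (ha : Rep a) (hb : Rep b) : Rep (a + b) := by
  obtain ⟨J, p, hp⟩ := ha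
  obtain ⟨K, q, hq⟩ := hb
  obtain ⟨p', hp'⟩ := rep_extend hp (le_max_left J K)
  obtain ⟨q', hq'⟩ := rep_extend hq (le_max_right J K)
  refine ⟨max J K, fun j => p' j + q' j, ?_⟩
  rw [hp', hq', ← Finset.sum_add_distrib]
  exact Finset.sum_congr rfl fun j _ => by rw [mulLeft_add', add_mul]

lemma Rep.smul (c : ℂ) {b : EE} (hb : Rep b) : Rep (c • b) := by
  obtain ⟨J, p, hp⟩ := hb
  refine ⟨J, fun j => c • p j, ?_⟩
  rw [hp, Finset.smul_sum]
  exact Finset.sum_congr rfl fun j _ => by rw [mulLeft_smul', smul_mul_assoc]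

lemma Rep.zero : Rep (0 : EE) := ⟨0, fun _ => 0, by simp [mulLeft_zero']⟩

lemma Rep.one : Rep (1 : EE) := by
  refine ⟨0, fun _ => 1, ?_⟩
  simp [LinearMap.mulLeft_one]
  rfl

lemma Rep.zmul {b : EE} (hb : Rep b) : Rep (zz * b) := by
  obtain ⟨J, p, hp⟩ := hb
  refine ⟨J, fun j => X 0 * p j, ?_⟩
  rw [hp, Finset.mul_sum]
  exact Finset.sum_congr rfl fun j _ => by
    rw [← mul_assoc, show zz = LinearMap.mulLeft ℂ (X (0:Fin 1) : PP) from rfl,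
      mulLeft_mulLeft]

lemma rep_shift (J : ℕ) (p : ℕ → PP) :
    Rep (∑ j ∈ Finset.range (J + 1), LinearMap.mulLeft ℂ (p j) * dd ^ (j + 1)) := by
  refine ⟨J + 1, fun j => if j = 0 then 0 else p (j - 1), ?_⟩
  symm
  rw [Finset.sum_range_succ']
  simp [mulLeft_zero']

lemma Rep.dmul {b : EE} (hb : Rep b) : Rep (dd * b) := by
  obtain ⟨J, p, hp⟩ := hb
  have h1 : dd * b =
      (∑ j ∈ Finset.range (J + 1), LinearMap.mulLeft ℂ (pderiv 0 (p j)) * dd ^ j)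
      + ∑ j ∈ Finset.range (J + 1), LinearMap.mulLeft ℂ (p j) * dd ^ (j + 1) := by
    rw [hp, Finset.mul_sum, ← Finset.sum_add_distrib]
    refine Finset.sum_congr rfl fun j _ => ?_
    rw [← mul_assoc, dd_mulLeft, add_mul, mul_assoc, ← pow_succ']
    abel
  rw [h1]
  exact Rep.add ⟨J, fun j => pderiv 0 (p j), rfl⟩ (rep_shift J p)

lemma rep_of_word {x : EE}
    (hx : x ∈ Submonoid.closure (Set.range (zEnd 1) ∪ Set.range (dEnd 1))) : Rep x := by
  induction hx using Submonoid.closure_induction_left with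
  | one => exact Rep.one
  | mul_left g hg y hy ihy =>
      rcases hg with ⟨i, rfl⟩ | ⟨i, rfl⟩
      · rw [show (i : Fin 1) = 0 from Subsingleton.elim _ _]
        exact ihy.zmul
      · rw [show (i : Fin 1) = 0 from Subsingleton.elim _ _]
        exact ihy.dmul

lemma rep_of_mem {b : EE} (hb : b ∈ Weyl 1) : Rep b := by
  have hb' : b ∈ Submodule.span ℂ
      ((Submonoid.closure (Set.range (zEnd 1) ∪ Set.range (dEnd 1)) : Submonoid EE) : Set EE) := by
    rw [← Algebra.adjoin_eq_span]
    exact hb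
  clear hb
  induction hb' using Submodule.span_induction with
  | mem x hx => exact rep_of_word hx
  | zero => exact Rep.zero
  | add x y hx hy ihx ihy => exact ihx.add ihy
  | smul c x hx ih => exact ih.smul c

lemma dd_pow_X_pow (i j : ℕ) :
    (dd ^ i) ((X 0 : PP) ^ j) = (j.descFactorial i : ℂ) • (X 0 : PP) ^ (j - i) := by
  induction i with
  | zero => simp
  | succ i ih =>
      rw [pow_succ', mul_apply', ih, map_smul]
      have hd : dd ((X 0 : PP) ^ (j - i)) = ((j - i : ℕ) : ℂ) • (X 0 : PP) ^ (j - i - 1) := by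
        rw [dd_apply, pderiv_pow, pderiv_X_self, mul_one, smul_eq_C_mul,
          MvPolynomial.C_eq_coe_nat]
      rw [hd, smul_smul, Nat.sub_sub, Nat.descFactorial_succ]
      push_cast
      ring_nf

lemma coeff_zero_of_cc (J : ℕ) (p : ℕ → PP)
    (h : ∀ q : PP, constantCoeff
      ((∑ j ∈ Finset.range (J + 1), LinearMap.mulLeft ℂ (p j) * dd ^ j) q) = 0)
    {j : ℕ} (hj : j ∈ Finset.range (J + 1)) : constantCoeff (p j) = 0 := by
  have h1 := h ((X 0 : PP) ^ j)
  rw [LinearMap.sum_apply] at h1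
  simp only [mul_apply', LinearMap.mulLeft_apply, dd_pow_X_pow] at h1
  rw [map_sum] at h1
  rw [Finset.sum_eq_single_of_mem j hj (fun i _ hij => ?_)] at h1
  · rw [map_mul, constantCoeff_smul, map_pow, constantCoeff_X, Nat.sub_self, pow_zero,
      Nat.descFactorial_self, smul_eq_mul, mul_one] at h1
    have hfac : ((j.factorial : ℂ)) ≠ 0 := Nat.cast_ne_zero.mpr (Nat.factorial_ne_zero j)
    exact (mul_eq_zero.mp h1).resolve_right hfac
  · rw [map_mul, constantCoeff_smul, map_pow, constantCoeff_X, smul_eq_mul]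
    rcases lt_or_gt_of_ne hij with hlt | hgt
    · rw [zero_pow (by omega : j - i ≠ 0), mul_zero, mul_zero]
    · rw [Nat.descFactorial_eq_zero_iff_lt.mpr hgt]
      simp

lemma exists_X_mul {p : PP} (h : constantCoeff p = 0) : ∃ q : PP, p = X 0 * q := by
  refine ⟨∑ m ∈ p.support, monomial (m - Finsupp.single 0 1) (coeff m p), ?_⟩
  rw [Finset.mul_sum]
  conv_lhs => rw [p.as_sum]
  refine Finset.sum_congr rfl fun m hm => ?_
  have hm0 : m 0 ≠ 0 := by
    intro h0
    have hmz : m = 0 := Finsupp.ext fun a => by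
      rw [Subsingleton.elim a (0 : Fin 1)]; simpa using h0
    rw [mem_support_iff, hmz] at hm
    rw [constantCoeff_eq] at h
    exact hm h
  have hmm : Finsupp.single (0 : Fin 1) 1 + (m - Finsupp.single 0 1) = m :=
    Finsupp.ext fun a => by
      rw [Subsingleton.elim a (0 : Fin 1)]
      simp only [Finsupp.add_apply, Finsupp.tsub_apply, Finsupp.single_eq_same]
      omega
  rw [X, monomial_mul, one_mul, hmm]

lemma pe_apply_monomial (α : ℂ) (m : Fin 1 →₀ ℕ) (c : ℂ) :
    (zz * dd + algebraMap ℂ EE α) (monomial m c) = ((m 0 : ℂ) + α) • monomial m c := by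
  rw [LinearMap.add_apply, Module.algebraMap_end_apply, mul_apply', dd_apply,
    pderiv_monomial, zz_apply]
  rcases Nat.eq_zero_or_pos (m 0) with h0 | h0
  · rw [h0]
    simp
  · have hmm : Finsupp.single (0 : Fin 1) 1 + (m - Finsupp.single 0 1) = m :=
      Finsupp.ext fun a => by
        rw [Subsingleton.elim a (0 : Fin 1)]
        simp only [Finsupp.add_apply, Finsupp.tsub_apply, Finsupp.single_eq_same]
        omega
    rw [X, monomial_mul, one_mul, hmm, smul_monomial, ← map_add, smul_monomial]
    congr 1
    simp only [smul_eq_mul]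
    ring

lemma pe_surjective (α : ℂ) (hα : ∀ k : ℕ, α ≠ -(k : ℂ)) :
    Function.Surjective (zz * dd + algebraMap ℂ EE α : EE) := by
  intro r
  induction r using MvPolynomial.induction_on' with
  | monomial m c =>
      have hne : ((m 0 : ℂ) + α) ≠ 0 := by
        intro h
        exact hα (m 0) (by linear_combination h)
      refine ⟨((m 0 : ℂ) + α)⁻¹ • monomial m c, ?_⟩
      rw [map_smul, pe_apply_monomial, smul_smul, inv_mul_cancel₀ hne, one_smul]
  | add p q ihp ihq =>
      obtain ⟨p', hp⟩ := ihp
      obtain ⟨q', hq⟩ := ihq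
      exact ⟨p' + q', by rw [map_add, hp, hq]⟩

lemma zz_cancel {f g : EE} (h : zz * f = zz * g) : f = g := by
  refine LinearMap.ext fun q => ?_
  have h2 : (zz * f) q = (zz * g) q := by rw [h]
  rw [mul_apply', mul_apply', zz_apply, zz_apply] at h2
  exact mul_left_cancel₀ (MvPolynomial.X_ne_zero 0) h2

lemma key (α : ℂ) (hα : ∀ k : ℕ, α ≠ -(k : ℂ)) {a b : EE}
    (hbW : b ∈ Weyl 1)
    (h : b * (zz * dd + algebraMap ℂ EE α) = zz * a) :
    ∃ c : EE, c ∈ Weyl 1 ∧ c * (zz * dd + algebraMap ℂ EE α) = a := by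
  have hcc : ∀ q : PP, constantCoeff (b q) = 0 := by
    intro q
    obtain ⟨q', hq'⟩ := pe_surjective α hα q
    rw [← hq', ← mul_apply', h, mul_apply', zz_apply, map_mul, constantCoeff_X, zero_mul]
  obtain ⟨J, p, hp⟩ := rep_of_mem hbW
  have hp0 : ∀ j ∈ Finset.range (J + 1), constantCoeff (p j) = 0 := fun j hj =>
    coeff_zero_of_cc J p (fun q => by rw [← hp]; exact hcc q) hj
  have hq : ∀ j : ℕ, ∃ qq : PP, j ∈ Finset.range (J + 1) → p j = X 0 * qq := by
    intro j
    by_cases hj : j ∈ Finset.range (J + 1)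
    · obtain ⟨qq, hqq⟩ := exists_X_mul (hp0 j hj)
      exact ⟨qq, fun _ => hqq⟩
    · exact ⟨0, fun hc => absurd hc hj⟩
  choose q hq using hq
  set c : EE := ∑ j ∈ Finset.range (J + 1), LinearMap.mulLeft ℂ (q j) * dd ^ j with hc
  have hzc : zz * c = b := by
    rw [hc, Finset.mul_sum, hp]
    refine Finset.sum_congr rfl fun j hj => ?_
    rw [← mul_assoc, show zz = LinearMap.mulLeft ℂ (X (0 : Fin 1) : PP) from rfl,
      mulLeft_mulLeft, ← hq j hj]
  have hcW : c ∈ Weyl 1 := by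
    rw [hc]
    exact sum_mem fun j _ => mul_mem (mulLeft_mem (q j)) (pow_mem dd_mem j)
  refine ⟨c, hcW, ?_⟩
  apply zz_cancel
  rw [← mul_assoc, hzc, h]

end

end NoZTorAux


/-- Let `D` be the first Weyl algebra, `α ∈ ℂ` with
`α ∉ {0,−1,−2,…}`. Then the left `D`-module `M = D/D·(z∂ + α)` has no
`z`-torsion: if `z·m = 0` in `M` then `m = 0`. -/
theorem no_z_torsion (α : ℂ) (hα : ∀ k : ℕ, α ≠ -(k : ℂ)) :
    ∀ m : Weyl 1 ⧸ Submodule.span (Weyl 1)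
        {zW 1 0 * dW 1 0 + algebraMap ℂ (Weyl 1) α},
      zW 1 0 • m = 0 → m = 0 := by
  intro m hm
  obtain ⟨a, rfl⟩ := Submodule.Quotient.mk_surjective _ m
  rw [← Submodule.Quotient.mk_smul, Submodule.Quotient.mk_eq_zero, smul_eq_mul,
    Submodule.mem_span_singleton] at hm
  obtain ⟨b, hb⟩ := hm
  rw [smul_eq_mul] at hb
  have hval : (b : NoZTorAux.EE) *
      (NoZTorAux.zz * NoZTorAux.dd + algebraMap ℂ NoZTorAux.EE α) =
      NoZTorAux.zz * (a : NoZTorAux.EE) := congrArg Subtype.val hb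
  obtain ⟨c, hcW, hc⟩ := NoZTorAux.key α hα b.2 hval
  rw [Submodule.Quotient.mk_eq_zero, Submodule.mem_span_singleton]
  refine ⟨⟨c, hcW⟩, ?_⟩
  rw [smul_eq_mul]
  exact Subtype.ext hc
end

section
/- Let M = D/∑ᵢ D·(zᵢ∂ᵢ + αᵢ) be the cyclic module over the n-th Weyl algebra D, with all αᵢ ∉ {0,−1,−2,...}. Then for each i, multiplication by zᵢ is injective on M. -/
/-!
The `n`-th Weyl algebra over `ℂ`, realized concretely as the subalgebra of
`ℂ`-linear endomorphisms of the polynomial ring `ℂ[z₁,…,zₙ]` generated by the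
multiplication operators `zᵢ` and the partial derivative operators `∂ᵢ`
(these satisfy `[∂ᵢ, zⱼ] = δᵢⱼ`, all other generators commuting).
-/

open MvPolynomial

set_option synthInstance.maxHeartbeats 1000000
set_option maxHeartbeats 1000000

namespace WeylAux

variable {n : ℕ}

/-- Falling factorial `t(t-1)⋯(t-b+1)` in `ℂ`. -/
noncomputable def ffC (t : ℂ) (b : ℕ) : ℂ := ∏ j ∈ Finset.range b, (t - j)

lemma ffC_zero (t : ℂ) : ffC t 0 = 1 := Finset.prod_range_zero _

lemma ffC_succ (t : ℂ) (b : ℕ) : ffC t (b + 1) = ffC t b * (t - b) :=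
  Finset.prod_range_succ _ _

lemma ffC_nat_eq_zero {t b : ℕ} (h : t < b) : ffC (t : ℂ) b = 0 :=
  Finset.prod_eq_zero (Finset.mem_range.2 h) (by simp)

lemma ffC_nat_self_ne_zero (t : ℕ) : ffC (t : ℂ) t ≠ 0 := by
  rw [ffC, Finset.prod_ne_zero_iff]
  intro j hj
  rw [Finset.mem_range] at hj
  intro h
  exact hj.ne' (Nat.cast_injective (sub_eq_zero.mp h))

/-- `∏ᵢ ffC (g i) (b i)`. -/
noncomputable def pcoef (g : Fin n → ℂ) (b : Fin n →₀ ℕ) : ℂ := ∏ i, ffC (g i) (b i)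

lemma pcoef_zero (g : Fin n → ℂ) : pcoef g 0 = 1 := by
  simp [pcoef, ffC_zero]

lemma pcoef_add_single (g : Fin n → ℂ) (b : Fin n →₀ ℕ) (i : Fin n) :
    pcoef g (b + Finsupp.single i 1) = pcoef g b * (g i - b i) := by
  unfold pcoef
  have h2 : ∀ j ∈ (Finset.univ : Finset (Fin n)),
      ffC (g j) ((b + Finsupp.single i 1 : Fin n →₀ ℕ) j)
        = ffC (g j) (b j) * (if j = i then (g i - (b i : ℂ)) else 1) := by
    intro j _
    by_cases hji : j = i
    · subst hji
      simp [Finsupp.add_apply, ffC_succ]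
    · simp [Finsupp.add_apply, Finsupp.single_apply, Ne.symm hji, hji]
  rw [Finset.prod_congr rfl h2, Finset.prod_mul_distrib,
    Finset.prod_ite_eq' Finset.univ i (fun _ => (g i - (b i : ℂ)))]
  simp

/-- Coefficient of `z^a ∂^b` acting on `z^t`. -/
noncomputable def wc (t b : Fin n →₀ ℕ) : ℂ := pcoef (fun i => (t i : ℂ)) b

lemma wc_eq_zero {t b : Fin n →₀ ℕ} (h : ∃ i, t i < b i) : wc t b = 0 := by
  obtain ⟨i, hi⟩ := h
  exact Finset.prod_eq_zero (Finset.mem_univ i) (ffC_nat_eq_zero hi)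

lemma wc_self_ne_zero (b : Fin n →₀ ℕ) : wc b b ≠ 0 := by
  rw [wc, pcoef, Finset.prod_ne_zero_iff]
  intro i _
  exact ffC_nat_self_ne_zero (b i)

/-- The operator `z^a ∂^b`. -/
noncomputable def Wop (a b : Fin n →₀ ℕ) : Module.End ℂ (MvPolynomial (Fin n) ℂ) :=
  (basisMonomials (Fin n) ℂ).constr ℂ fun t => monomial (t + a - b) (wc t b)

lemma Wop_monomial (a b t : Fin n →₀ ℕ) :
    Wop a b (monomial t 1) = monomial (t + a - b) (wc t b) := by
  have h : (monomial t 1 : MvPolynomial (Fin n) ℂ) = basisMonomials (Fin n) ℂ t := by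
    rw [coe_basisMonomials]
  rw [h, Wop, Module.Basis.constr_basis]

lemma Wop_monomial' (a b t : Fin n →₀ ℕ) (c : ℂ) :
    Wop a b (monomial t c) = monomial (t + a - b) (c * wc t b) := by
  have h : (monomial t c : MvPolynomial (Fin n) ℂ) = c • monomial t 1 := by
    rw [smul_monomial, smul_eq_mul, mul_one]
  rw [h, map_smul, Wop_monomial, smul_monomial, smul_eq_mul]

lemma endExt {f g : Module.End ℂ (MvPolynomial (Fin n) ℂ)}
    (h : ∀ t : Fin n →₀ ℕ, f (monomial t 1) = g (monomial t 1)) : f = g := by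
  apply (basisMonomials (Fin n) ℂ).ext
  intro t
  simpa [coe_basisMonomials] using h t

end WeylAux
namespace WeylAux

variable {n : ℕ}

lemma zEnd_apply (i : Fin n) (p : MvPolynomial (Fin n) ℂ) : zEnd n i p = X i * p := rfl

lemma dEnd_apply (i : Fin n) (p : MvPolynomial (Fin n) ℂ) : dEnd n i p = pderiv i p := rfl

lemma Wop_zero_zero : (Wop 0 0 : Module.End ℂ (MvPolynomial (Fin n) ℂ)) = 1 := by
  apply endExt
  intro t
  rw [Wop_monomial, Module.End.one_apply]
  have h1 : t + 0 - 0 = t := by simp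
  have h2 : wc t (0 : Fin n →₀ ℕ) = 1 := pcoef_zero _
  rw [h1, h2]

lemma zEnd_eq_Wop (i : Fin n) : zEnd n i = Wop (Finsupp.single i 1) 0 := by
  apply endExt
  intro t
  rw [Wop_monomial, zEnd_apply]
  have h2 : wc t (0 : Fin n →₀ ℕ) = 1 := pcoef_zero _
  rw [h2, X, monomial_mul, one_mul]
  congr 1
  simp [add_comm]

lemma dEnd_eq_Wop (i : Fin n) : dEnd n i = Wop 0 (Finsupp.single i 1) := by
  apply endExt
  intro t
  rw [Wop_monomial, dEnd_apply, pderiv_monomial, one_mul]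
  have h1 : t + 0 - Finsupp.single i 1 = t - Finsupp.single i 1 := by simp
  have h2 : wc t (Finsupp.single i 1) = (t i : ℂ) := by
    have h3 : (Finsupp.single i 1 : Fin n →₀ ℕ) = 0 + Finsupp.single i 1 := by simp
    rw [wc, h3, pcoef_add_single, pcoef_zero]
    simp
  rw [h1, h2]

/-- `zᵢ ∘ z^a∂^b = z^{a+eᵢ}∂^b`. -/
lemma zEnd_mul_Wop (i : Fin n) (a b : Fin n →₀ ℕ) :
    zEnd n i * Wop a b = Wop (a + Finsupp.single i 1) b := by
  apply endExt
  intro t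
  rw [Module.End.mul_apply, Wop_monomial, Wop_monomial, zEnd_apply, X, monomial_mul, one_mul]
  by_cases h : ∃ j, t j < b j
  · rw [wc_eq_zero h]
    simp
  · push_neg at h
    have hexp : Finsupp.single i 1 + (t + a - b) = t + (a + Finsupp.single i 1) - b := by
      ext j
      have hj := h j
      rcases eq_or_ne j i with rfl | hji
      · simp only [Finsupp.add_apply, Finsupp.tsub_apply, Finsupp.single_eq_same]
        omega
      · simp only [Finsupp.add_apply, Finsupp.tsub_apply,
          Finsupp.single_eq_of_ne' (Ne.symm hji)]
        omega
    rw [hexp]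

end WeylAux
namespace WeylAux

variable {n : ℕ}

/-- `∂ᵢ ∘ z^a∂^b = z^a∂^{b+eᵢ} + aᵢ z^{a-eᵢ}∂^b`. -/
lemma dEnd_mul_Wop (i : Fin n) (a b : Fin n →₀ ℕ) :
    dEnd n i * Wop a b =
      Wop a (b + Finsupp.single i 1) + (a i : ℂ) • Wop (a - Finsupp.single i 1) b := by
  apply endExt
  intro t
  rw [Module.End.mul_apply, LinearMap.add_apply, LinearMap.smul_apply,
    Wop_monomial, Wop_monomial, Wop_monomial, dEnd_apply, pderiv_monomial]
  by_cases hb : ∃ j, t j < b j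
  · obtain ⟨j, hj⟩ := hb
    have h1 : wc t b = 0 := wc_eq_zero ⟨j, hj⟩
    have h2 : wc t (b + Finsupp.single i 1) = 0 := by
      apply wc_eq_zero
      refine ⟨j, ?_⟩
      simp only [Finsupp.add_apply]
      omega
    simp [h1, h2]
  · push_neg at hb
    have hcast : (((t + a - b) i : ℕ) : ℂ) = (t i : ℂ) + (a i : ℂ) - (b i : ℂ) := by
      have h4 : (t + a - b) i = t i + a i - b i := by
        simp [Finsupp.tsub_apply, Finsupp.add_apply]
      rw [h4]
      have hle : b i ≤ t i + a i := le_trans (hb i) (Nat.le_add_right _ _)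
      push_cast [hle]
      ring
    have hwc : wc t (b + Finsupp.single i 1) = wc t b * ((t i : ℂ) - (b i : ℂ)) :=
      pcoef_add_single _ b i
    have hexp1 : t + a - (b + Finsupp.single i 1) = t + a - b - Finsupp.single i 1 := by
      ext j
      rcases eq_or_ne j i with rfl | hji
      · simp only [Finsupp.tsub_apply, Finsupp.add_apply, Finsupp.single_eq_same]
        omega
      · simp only [Finsupp.tsub_apply, Finsupp.add_apply,
          Finsupp.single_eq_of_ne' (Ne.symm hji)]
        omega
    by_cases ha : a i = 0
    · have h5 : ((a i : ℕ) : ℂ) = 0 := by rw [ha]; norm_cast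
      rw [h5, zero_smul, add_zero, hexp1, hwc]
      congr 1
      rw [hcast, ha]
      push_cast
      ring
    · have hexp2 : t + (a - Finsupp.single i 1) - b = t + a - b - Finsupp.single i 1 := by
        ext j
        have hbj := hb j
        rcases eq_or_ne j i with rfl | hji
        · simp only [Finsupp.tsub_apply, Finsupp.add_apply, Finsupp.single_eq_same]
          omega
        · simp only [Finsupp.tsub_apply, Finsupp.add_apply,
            Finsupp.single_eq_of_ne' (Ne.symm hji)]
          omega
      rw [hexp1, hexp2, smul_monomial, ← map_add]
      congr 1
      rw [hcast, hwc]
      push_cast [smul_eq_mul]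
      ring

/-- `z^a ∘ z^c∂^d = z^{a+c}∂^d`. -/
lemma Wop_mul_Wop (a c d : Fin n →₀ ℕ) :
    Wop a 0 * Wop c d = Wop (a + c) d := by
  apply endExt
  intro t
  rw [Module.End.mul_apply, Wop_monomial, Wop_monomial', Wop_monomial]
  by_cases h : ∃ j, t j < d j
  · rw [wc_eq_zero h]
    simp
  · push_neg at h
    have h2 : wc (t + c - d) (0 : Fin n →₀ ℕ) = 1 := pcoef_zero _
    rw [h2, mul_one]
    have hexp : t + c - d + a - 0 = t + (a + c) - d := by
      ext j
      have hj := h j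
      simp only [Finsupp.tsub_apply, Finsupp.add_apply, Finsupp.coe_zero, Pi.zero_apply]
      omega
    rw [hexp]

/-- reduction: `z^{a+eᵢ}∂^{b+eᵢ} = z^a∂^b ∘ (zᵢ∂ᵢ) - bᵢ z^a∂^b`. -/
lemma Wop_reduction (i : Fin n) (a b : Fin n →₀ ℕ) :
    Wop (a + Finsupp.single i 1) (b + Finsupp.single i 1) =
      Wop a b * (zEnd n i * dEnd n i) - (b i : ℂ) • Wop a b := by
  apply endExt
  intro t
  rw [LinearMap.sub_apply, LinearMap.smul_apply, Module.End.mul_apply, Module.End.mul_apply,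
    Wop_monomial, Wop_monomial, dEnd_apply, pderiv_monomial, one_mul, zEnd_apply, X,
    monomial_mul, one_mul, Wop_monomial', smul_monomial]
  have hexp : t + (a + Finsupp.single i 1) - (b + Finsupp.single i 1) = t + a - b := by
    ext j
    rcases eq_or_ne j i with rfl | hji
    · simp only [Finsupp.tsub_apply, Finsupp.add_apply, Finsupp.single_eq_same]
      omega
    · simp only [Finsupp.tsub_apply, Finsupp.add_apply,
        Finsupp.single_eq_of_ne' (Ne.symm hji)]
      omega
  by_cases ht : t i = 0
  · have h2 : ((t i : ℕ) : ℂ) * wc (Finsupp.single i 1 + (t - Finsupp.single i 1)) b = 0 := by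
      rw [ht]
      simp
    rw [hexp, h2, map_zero, zero_sub, ← map_neg]
    congr 1
    simp only [wc]
    rw [pcoef_add_single]
    simp only [smul_eq_mul, ht, Nat.cast_zero]
    ring
  · have hte : Finsupp.single i 1 + (t - Finsupp.single i 1) = t := by
      ext j
      rcases eq_or_ne j i with rfl | hji
      · simp only [Finsupp.tsub_apply, Finsupp.add_apply, Finsupp.single_eq_same]
        omega
      · simp only [Finsupp.tsub_apply, Finsupp.add_apply,
          Finsupp.single_eq_of_ne' (Ne.symm hji)]
        omega
    rw [hexp, hte, ← map_sub]
    congr 1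
    simp only [wc]
    rw [pcoef_add_single]
    simp only [smul_eq_mul]
    push_cast
    ring

end WeylAux
namespace WeylAux

variable {n : ℕ}

/-- Induction on finitely supported ℕ-vectors by adding one unit at a time. -/
lemma finsupp_induction_single {p : (Fin n →₀ ℕ) → Prop} (h0 : p 0)
    (hs : ∀ (i : Fin n) (f : Fin n →₀ ℕ), p f → p (f + Finsupp.single i 1)) :
    ∀ f, p f := by
  have key : ∀ (N : ℕ) (f : Fin n →₀ ℕ), (∑ i, f i) = N → p f := by
    intro N
    induction N with
    | zero =>
      intro f hf
      have hf0 : f = 0 := by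
        ext j
        have := (Finset.sum_eq_zero_iff).1 hf j (Finset.mem_univ j)
        simpa using this
      rwa [hf0]
    | succ N ih =>
      intro f hf
      have hex : ∃ i, f i ≠ 0 := by
        by_contra hno
        push_neg at hno
        rw [Finset.sum_eq_zero (fun j _ => hno j)] at hf
        omega
      obtain ⟨i, hi⟩ := hex
      set g := f - Finsupp.single i 1 with hg
      have hfg : f = g + Finsupp.single i 1 := by
        ext j
        rcases eq_or_ne j i with rfl | hji
        · simp only [hg, Finsupp.add_apply, Finsupp.tsub_apply, Finsupp.single_eq_same]
          omega
        · simp only [hg, Finsupp.add_apply, Finsupp.tsub_apply,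
            Finsupp.single_eq_of_ne' (Ne.symm hji)]
          omega
      have hsg : (∑ j, g j) = N := by
        have h1 : (∑ j, f j) = (∑ j, g j) + ∑ j, (Finsupp.single i 1 : Fin n →₀ ℕ) j := by
          rw [← Finset.sum_add_distrib]
          apply Finset.sum_congr rfl
          intro j _
          rw [hfg]
          simp [Finsupp.add_apply]
        have h2 : (∑ j, (Finsupp.single i 1 : Fin n →₀ ℕ) j) = 1 := by
          simp [Finsupp.single_apply]
        omega
      rw [hfg]
      exact hs i g (ih g hsg)
  intro f
  exact key (∑ i, f i) f rfl

lemma Wop_zero_mem (b : Fin n →₀ ℕ) : Wop 0 b ∈ Weyl n := by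
  induction b using finsupp_induction_single with
  | h0 =>
    rw [Wop_zero_zero]
    exact one_mem _
  | hs i b ih =>
    have h : Wop (0 : Fin n →₀ ℕ) (b + Finsupp.single i 1) = dEnd n i * Wop 0 b := by
      rw [dEnd_mul_Wop]
      simp
    rw [h]
    exact mul_mem (dW n i).2 ih

lemma Wop_mem (a b : Fin n →₀ ℕ) : Wop a b ∈ Weyl n := by
  induction a using finsupp_induction_single with
  | h0 => exact Wop_zero_mem b
  | hs i a ih =>
    rw [← zEnd_mul_Wop]
    exact mul_mem (zW n i).2 ih

/-- The standard monomials `z^a ∂^b` as elements of the Weyl algebra. -/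
noncomputable def WW (p : (Fin n →₀ ℕ) × (Fin n →₀ ℕ)) : Weyl n :=
  ⟨Wop p.1 p.2, Wop_mem p.1 p.2⟩

/-- The span of the standard monomials inside `End`. -/
noncomputable def Sspan (n : ℕ) : Submodule ℂ (Module.End ℂ (MvPolynomial (Fin n) ℂ)) :=
  Submodule.span ℂ (Set.range fun p : (Fin n →₀ ℕ) × (Fin n →₀ ℕ) => Wop p.1 p.2)

lemma Wop_mem_Sspan (a b : Fin n →₀ ℕ) : Wop a b ∈ Sspan n :=
  Submodule.subset_span ⟨(a, b), rfl⟩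

lemma dEnd_mul_mem_Sspan (i : Fin n) {x : Module.End ℂ (MvPolynomial (Fin n) ℂ)}
    (hx : x ∈ Sspan n) : dEnd n i * x ∈ Sspan n := by
  induction hx using Submodule.span_induction with
  | mem x hx =>
    obtain ⟨p, rfl⟩ := hx
    rw [dEnd_mul_Wop]
    exact add_mem (Wop_mem_Sspan _ _) (Submodule.smul_mem _ _ (Wop_mem_Sspan _ _))
  | zero => rw [mul_zero]; exact zero_mem _
  | add x y hx hy ihx ihy => rw [mul_add]; exact add_mem ihx ihy
  | smul c x hx ihx => rw [mul_smul_comm]; exact Submodule.smul_mem _ _ ihx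

lemma WopWop_mem_Sspan (b a c d : Fin n →₀ ℕ) : Wop a b * Wop c d ∈ Sspan n := by
  induction b using finsupp_induction_single generalizing a with
  | h0 =>
    rw [Wop_mul_Wop]
    exact Wop_mem_Sspan _ _
  | hs i b ih =>
    have h : Wop a (b + Finsupp.single i 1) =
        dEnd n i * Wop a b - (a i : ℂ) • Wop (a - Finsupp.single i 1) b := by
      rw [dEnd_mul_Wop]
      abel
    rw [h, sub_mul, smul_mul_assoc, mul_assoc]
    exact sub_mem (dEnd_mul_mem_Sspan i (ih a)) (Submodule.smul_mem _ _ (ih _))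

lemma mul_mem_Sspan {x y : Module.End ℂ (MvPolynomial (Fin n) ℂ)}
    (hx : x ∈ Sspan n) (hy : y ∈ Sspan n) : x * y ∈ Sspan n := by
  induction hx using Submodule.span_induction with
  | mem x hx =>
    obtain ⟨p, rfl⟩ := hx
    induction hy using Submodule.span_induction with
    | mem y hy =>
      obtain ⟨q, rfl⟩ := hy
      exact WopWop_mem_Sspan _ _ _ _
    | zero => rw [mul_zero]; exact zero_mem _
    | add y z hy hz ihy ihz => rw [mul_add]; exact add_mem ihy ihz
    | smul c y hy ihy => rw [mul_smul_comm]; exact Submodule.smul_mem _ _ ihy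
  | zero => rw [zero_mul]; exact zero_mem _
  | add x z hx hz ihx ihz => rw [add_mul]; exact add_mem ihx ihz
  | smul c x hx ihx => rw [smul_mul_assoc]; exact Submodule.smul_mem _ _ ihx

lemma weyl_le_Sspan {x : Module.End ℂ (MvPolynomial (Fin n) ℂ)} (hx : x ∈ Weyl n) :
    x ∈ Sspan n := by
  induction hx using Algebra.adjoin_induction with
  | mem x hx =>
    rcases hx with ⟨i, rfl⟩ | ⟨i, rfl⟩
    · rw [zEnd_eq_Wop]
      exact Wop_mem_Sspan _ _
    · rw [dEnd_eq_Wop]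
      exact Wop_mem_Sspan _ _
  | algebraMap r =>
    rw [Algebra.algebraMap_eq_smul_one (A := Module.End ℂ (MvPolynomial (Fin n) ℂ))]
    exact Submodule.smul_mem _ _ (Wop_zero_zero (n := n) ▸ Wop_mem_Sspan 0 0)
  | add x y hx hy ihx ihy => exact add_mem ihx ihy
  | mul x y hx hy ihx ihy => exact mul_mem_Sspan ihx ihy

/-- PBW: the standard monomials are linearly independent. -/
lemma Wop_linearIndependent :
    LinearIndependent ℂ (fun p : (Fin n →₀ ℕ) × (Fin n →₀ ℕ) => Wop p.1 p.2) := by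
  rw [linearIndependent_iff']
  intro s g hsum p hp
  by_contra hg
  have hne : (s.filter fun q => g q ≠ 0).Nonempty := ⟨p, Finset.mem_filter.2 ⟨hp, hg⟩⟩
  obtain ⟨q0, hq0mem, hq0min⟩ := Finset.exists_min_image _ (fun q => ∑ j, q.2 j) hne
  obtain ⟨hq0s, hq0g⟩ := Finset.mem_filter.1 hq0mem
  have happ : (∑ q ∈ s, g q • Wop q.1 q.2) (monomial q0.2 1) = 0 := by
    rw [hsum]
    rfl
  rw [LinearMap.sum_apply] at happ
  simp only [LinearMap.smul_apply, Wop_monomial] at happ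
  set T := s.filter (fun q => q.2 = q0.2) with hT
  have hq0T : q0 ∈ T := Finset.mem_filter.2 ⟨hq0s, rfl⟩
  have hzero : ∀ q ∈ s, q ∉ T →
      g q • (monomial (q0.2 + q.1 - q.2)) (wc q0.2 q.2) = 0 := by
    intro q hqs hqT
    have hq2 : q.2 ≠ q0.2 := fun h => hqT (Finset.mem_filter.2 ⟨hqs, h⟩)
    by_cases hgq : g q = 0
    · rw [hgq, zero_smul]
    · by_cases hlt : ∃ j, q0.2 j < q.2 j
      · rw [wc_eq_zero hlt]
        simp
      · exfalso
        push_neg at hlt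
        have hmin := hq0min q (Finset.mem_filter.2 ⟨hqs, hgq⟩)
        have hlt2 : ∑ j, q.2 j ≤ ∑ j, q0.2 j := Finset.sum_le_sum (fun j _ => hlt j)
        have heq : q.2 = q0.2 := by
          ext j
          by_contra hj
          have hstrict : ∑ j, q.2 j < ∑ j, q0.2 j :=
            Finset.sum_lt_sum (fun j _ => hlt j)
              ⟨j, Finset.mem_univ j, lt_of_le_of_ne (hlt j) hj⟩
          omega
        exact hq2 heq
  rw [← Finset.sum_subset (Finset.filter_subset _ _) hzero] at happ
  have hexp : ∀ q ∈ T, g q • (monomial (q0.2 + q.1 - q.2)) (wc q0.2 q.2)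
      = (monomial q.1) (g q * wc q0.2 q0.2) := by
    intro q hq
    have hq2 : q.2 = q0.2 := (Finset.mem_filter.1 hq).2
    have hcanc : q0.2 + q.1 - q0.2 = q.1 := by
      ext j
      simp only [Finsupp.tsub_apply, Finsupp.add_apply]
      omega
    rw [hq2, hcanc, smul_monomial, smul_eq_mul]
  rw [Finset.sum_congr rfl hexp] at happ
  have hcoeff := congrArg (coeff q0.1) happ
  rw [MvPolynomial.coeff_sum] at hcoeff
  simp only [coeff_monomial, coeff_zero] at hcoeff
  rw [Finset.sum_eq_single_of_mem q0 hq0T] at hcoeff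
  · rw [if_pos rfl] at hcoeff
    exact hq0g (by
      rcases mul_eq_zero.1 hcoeff with h | h
      · exact h
      · exact absurd h (wc_self_ne_zero q0.2))
  · intro q hq hqne
    have hq2 : q.2 = q0.2 := (Finset.mem_filter.1 hq).2
    have hq1 : q.1 ≠ q0.1 := by
      intro h
      exact hqne (Prod.ext h hq2)
    rw [if_neg hq1]

end WeylAux
namespace WeylAux

variable {n : ℕ}

lemma WW_linearIndependent : LinearIndependent ℂ (WW (n := n)) := by
  apply LinearIndependent.of_comp (Weyl n).val.toLinearMap
  exact Wop_linearIndependent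

lemma WW_span (x : Weyl n) : x ∈ Submodule.span ℂ (Set.range (WW (n := n))) := by
  have h1 : (x : Module.End ℂ (MvPolynomial (Fin n) ℂ)) ∈ Sspan n := weyl_le_Sspan x.2
  have hset : (Set.range fun p : (Fin n →₀ ℕ) × (Fin n →₀ ℕ) => Wop p.1 p.2)
      = (Weyl n).val.toLinearMap '' Set.range (WW (n := n)) := by
    ext y
    constructor
    · rintro ⟨p, rfl⟩
      exact ⟨WW p, ⟨p, rfl⟩, rfl⟩
    · rintro ⟨z, ⟨p, rfl⟩, rfl⟩
      exact ⟨p, rfl⟩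
  have h2 : Sspan n = Submodule.map (Weyl n).val.toLinearMap
      (Submodule.span ℂ (Set.range (WW (n := n)))) := by
    rw [Sspan, hset, Submodule.span_image]
  rw [h2] at h1
  obtain ⟨y, hy, hyx⟩ := h1
  have hyx' : y = x := Subtype.ext hyx
  rwa [hyx'] at hy

/-- PBW basis of the Weyl algebra. -/
noncomputable def WB : Module.Basis ((Fin n →₀ ℕ) × (Fin n →₀ ℕ)) ℂ (Weyl n) :=
  Module.Basis.mk WW_linearIndependent (fun x _ => WW_span x)

lemma WB_apply (p : (Fin n →₀ ℕ) × (Fin n →₀ ℕ)) : (WB (n := n)) p = WW p := by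
  rw [WB, Module.Basis.mk_apply]

/-- The target "Laurent-type" space: formal span of `z^{m-α}`, `m ∈ ℤⁿ`. -/
abbrev Vsp (n : ℕ) := (Fin n →₀ ℤ) →₀ ℂ

/-- Coercion of exponents. -/
noncomputable def emb (a : Fin n →₀ ℕ) : Fin n →₀ ℤ :=
  Finsupp.mapRange (fun x : ℕ => (x : ℤ)) (by simp) a

lemma emb_apply (a : Fin n →₀ ℕ) (j : Fin n) : emb a j = (a j : ℤ) :=
  Finsupp.mapRange_apply

lemma emb_add (a b : Fin n →₀ ℕ) : emb (a + b) = emb a + emb b := by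
  ext j
  simp [emb_apply, Finsupp.add_apply]

lemma emb_single (i : Fin n) : emb (Finsupp.single i 1) = Finsupp.single i 1 := by
  ext j
  rcases eq_or_ne j i with rfl | hji
  · simp [emb_apply]
  · simp [emb_apply, Finsupp.single_eq_of_ne' (Ne.symm hji)]

lemma emb_sub_single {a : Fin n →₀ ℕ} {i : Fin n} (h : a i ≠ 0) :
    emb (a - Finsupp.single i 1) = emb a - Finsupp.single i 1 := by
  ext j
  rcases eq_or_ne j i with rfl | hji
  · simp only [emb_apply, Finsupp.tsub_apply, Finsupp.sub_apply, Finsupp.single_eq_same]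
    omega
  · simp only [emb_apply, Finsupp.tsub_apply, Finsupp.sub_apply,
      Finsupp.single_eq_of_ne' (Ne.symm hji)]
    omega

section alpha

variable (α : Fin n → ℂ)

/-- The coefficient `(-α)(-α-1)⋯` attached to `∂^b` acting on `z^{-α}`. -/
noncomputable def cf (b : Fin n →₀ ℕ) : ℂ := pcoef (fun i => -α i) b

lemma cf_add_single (b : Fin n →₀ ℕ) (i : Fin n) :
    cf α (b + Finsupp.single i 1) = cf α b * (-α i - b i) := pcoef_add_single _ b i

lemma cf_ne_zero (hα : ∀ i : Fin n, ∀ k : ℕ, α i ≠ -(k : ℂ)) (b : Fin n →₀ ℕ) :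
    cf α b ≠ 0 := by
  rw [cf, pcoef, Finset.prod_ne_zero_iff]
  intro i _
  rw [ffC, Finset.prod_ne_zero_iff]
  intro j _
  intro h
  apply hα i j
  linear_combination -h

/-- The pairing `T ↦ T · z^{-α}` from the Weyl algebra to the Laurent space. -/
noncomputable def phi : Weyl n →ₗ[ℂ] Vsp n :=
  (WB (n := n)).constr ℂ fun p => Finsupp.single (emb p.1 - emb p.2) (cf α p.2)

lemma phi_WW (p : (Fin n →₀ ℕ) × (Fin n →₀ ℕ)) :
    phi α (WW p) = Finsupp.single (emb p.1 - emb p.2) (cf α p.2) := by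
  rw [← WB_apply, phi, Module.Basis.constr_basis]

lemma phi_WW' (a b : Fin n →₀ ℕ) :
    phi α (WW (a, b)) = Finsupp.single (emb a - emb b) (cf α b) :=
  phi_WW α (a, b)

/-- Shift operator `z^m ↦ z^{m+eᵢ}` on the Laurent space. -/
noncomputable def Sh (i : Fin n) : Vsp n →ₗ[ℂ] Vsp n :=
  Finsupp.lmapDomain ℂ ℂ (fun m => m + Finsupp.single i 1)

lemma Sh_single (i : Fin n) (m : Fin n →₀ ℤ) (c : ℂ) :
    Sh i (Finsupp.single m c) = Finsupp.single (m + Finsupp.single i 1) c :=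
  Finsupp.mapDomain_single

lemma Sh_injective (i : Fin n) : Function.Injective (Sh (n := n) i) :=
  Finsupp.mapDomain_injective (fun x y h => by
    have := congrArg (fun u => u - Finsupp.single i 1) h
    simpa using this)

/-- Derivative operator `z^{m-α} ↦ (mᵢ-αᵢ) z^{m-eᵢ-α}` on the Laurent space. -/
noncomputable def Der (i : Fin n) : Vsp n →ₗ[ℂ] Vsp n :=
  Finsupp.lsum ℂ fun m => LinearMap.toSpanSingleton ℂ (Vsp n)
    (Finsupp.single (m - Finsupp.single i 1) (((m i : ℤ) : ℂ) - α i))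

lemma Der_single (i : Fin n) (m : Fin n →₀ ℤ) (c : ℂ) :
    Der α i (Finsupp.single m c)
      = c • Finsupp.single (m - Finsupp.single i 1) (((m i : ℤ) : ℂ) - α i) := by
  rw [Der, Finsupp.lsum_single]
  rfl

lemma zW_mul_WW (i : Fin n) (a b : Fin n →₀ ℕ) :
    zW n i * WW (a, b) = WW (a + Finsupp.single i 1, b) := by
  apply Subtype.ext
  rw [MulMemClass.coe_mul]
  exact zEnd_mul_Wop i a b

lemma dW_mul_WW (i : Fin n) (a b : Fin n →₀ ℕ) :
    dW n i * WW (a, b) =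
      WW (a, b + Finsupp.single i 1) + (a i : ℂ) • WW (a - Finsupp.single i 1, b) := by
  apply Subtype.ext
  rw [MulMemClass.coe_mul]
  push_cast
  exact dEnd_mul_Wop i a b

lemma one_eq_WW : (1 : Weyl n) = WW (0, 0) := by
  apply Subtype.ext
  exact Wop_zero_zero.symm

lemma phi_z_mul (i : Fin n) (x : Weyl n) :
    phi α (zW n i * x) = Sh i (phi α x) := by
  have h : (phi α).comp (LinearMap.mulLeft ℂ (zW n i)) = (Sh i).comp (phi α) := by
    apply (WB (n := n)).ext
    intro p
    rw [LinearMap.comp_apply, LinearMap.comp_apply, LinearMap.mulLeft_apply, WB_apply]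
    obtain ⟨a, b⟩ := p
    rw [zW_mul_WW, phi_WW', phi_WW', Sh_single]
    congr 1
    rw [emb_add, emb_single]
    abel
  exact congrArg (fun f => f x) (congrArg DFunLike.coe h)

lemma phi_d_mul (i : Fin n) (x : Weyl n) :
    phi α (dW n i * x) = Der α i (phi α x) := by
  have h : (phi α).comp (LinearMap.mulLeft ℂ (dW n i)) = (Der α i).comp (phi α) := by
    apply (WB (n := n)).ext
    intro p
    rw [LinearMap.comp_apply, LinearMap.comp_apply, LinearMap.mulLeft_apply, WB_apply]
    obtain ⟨a, b⟩ := p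
    rw [dW_mul_WW, map_add, map_smul, phi_WW', phi_WW', phi_WW', Der_single]
    have hmi : (((emb a - emb b) i : ℤ) : ℂ) = (a i : ℂ) - (b i : ℂ) := by
      rw [Finsupp.sub_apply, emb_apply, emb_apply]
      push_cast
      ring
    rw [Finsupp.smul_single, Finsupp.smul_single, hmi, smul_eq_mul, smul_eq_mul]
    have hexp : emb a - emb (b + Finsupp.single i 1)
        = emb a - emb b - Finsupp.single i 1 := by
      rw [emb_add, emb_single]
      abel
    by_cases ha : a i = 0
    · rw [hexp, cf_add_single]
      have h0 : ((a i : ℕ) : ℂ) = 0 := by rw [ha]; norm_cast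
      rw [h0, zero_mul, Finsupp.single_zero, add_zero]
      congr 1
      ring
    · have hexp2 : emb a - Finsupp.single i 1 - emb b
          = emb a - emb b - Finsupp.single i 1 := by abel
      rw [hexp, cf_add_single, emb_sub_single ha, hexp2, ← Finsupp.single_add]
      congr 1
      ring
  exact congrArg (fun f => f x) (congrArg DFunLike.coe h)

lemma exists_intertwiner (T : Weyl n) :
    ∃ R : Vsp n →ₗ[ℂ] Vsp n, ∀ x : Weyl n, phi α (T * x) = R (phi α x) := by
  obtain ⟨Tv, hTv⟩ := T
  induction hTv using Algebra.adjoin_induction with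
  | mem y hy =>
    rcases hy with ⟨i, rfl⟩ | ⟨i, rfl⟩
    · exact ⟨Sh i, fun x => phi_z_mul α i x⟩
    · exact ⟨Der α i, fun x => phi_d_mul α i x⟩
  | algebraMap r =>
    refine ⟨r • LinearMap.id, fun x => ?_⟩
    have h : (⟨algebraMap ℂ (Module.End ℂ (MvPolynomial (Fin n) ℂ)) r,
          Subalgebra.algebraMap_mem (Weyl n) r⟩ : Weyl n) * x
        = r • x := by
      apply Subtype.ext
      rw [MulMemClass.coe_mul]
      rw [SetLike.val_smul]
      exact (Algebra.smul_def r (x : Module.End ℂ (MvPolynomial (Fin n) ℂ))).symm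
    rw [h, map_smul]
    rfl
  | add y z hy hz ihy ihz =>
    obtain ⟨R1, h1⟩ := ihy
    obtain ⟨R2, h2⟩ := ihz
    refine ⟨R1 + R2, fun x => ?_⟩
    have h : (⟨y + z, add_mem hy hz⟩ : Weyl n) * x
        = (⟨y, hy⟩ : Weyl n) * x + (⟨z, hz⟩ : Weyl n) * x := by
      apply Subtype.ext
      rw [MulMemClass.coe_mul]
      show (y + z) * (x : Module.End ℂ (MvPolynomial (Fin n) ℂ)) = _
      rw [add_mul]
      rfl
    rw [h, map_add, h1, h2]
    rfl
  | mul y z hy hz ihy ihz =>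
    obtain ⟨R1, h1⟩ := ihy
    obtain ⟨R2, h2⟩ := ihz
    refine ⟨R1.comp R2, fun x => ?_⟩
    have h : (⟨y * z, mul_mem hy hz⟩ : Weyl n) * x
        = (⟨y, hy⟩ : Weyl n) * ((⟨z, hz⟩ : Weyl n) * x) := by
      apply Subtype.ext
      rw [MulMemClass.coe_mul, MulMemClass.coe_mul, MulMemClass.coe_mul]
      exact mul_assoc _ _ _
    rw [h, h1, h2]
    rfl

end alpha

end WeylAux
namespace WeylAux

variable {n : ℕ} (α : Fin n → ℂ)

/-- The left ideal `∑ᵢ D(zᵢ∂ᵢ + αᵢ)`. -/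
noncomputable def Isp (n : ℕ) (α : Fin n → ℂ) : Submodule (Weyl n) (Weyl n) :=
  Submodule.span (Weyl n)
    (Set.range fun i => zW n i * dW n i + algebraMap ℂ (Weyl n) (α i))

lemma zW_mul_dW (i : Fin n) :
    zW n i * dW n i = WW (Finsupp.single i 1, Finsupp.single i 1) := by
  apply Subtype.ext
  rw [MulMemClass.coe_mul]
  show zEnd n i * dEnd n i = Wop (Finsupp.single i 1) (Finsupp.single i 1)
  rw [zEnd_eq_Wop, dEnd_eq_Wop, Wop_mul_Wop, add_zero]

lemma cf_single (i : Fin n) : cf α (Finsupp.single i 1) = -α i := by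
  have h : (Finsupp.single i 1 : Fin n →₀ ℕ) = 0 + Finsupp.single i 1 := by rw [zero_add]
  rw [h, cf_add_single]
  show pcoef _ 0 * _ = _
  rw [pcoef_zero]
  simp

lemma phi_Isp {x : Weyl n} (hx : x ∈ Isp n α) : phi α x = 0 := by
  induction hx using Submodule.span_induction with
  | mem x hx =>
    obtain ⟨i, rfl⟩ := hx
    rw [map_add, zW_mul_dW, phi_WW']
    have h1 : phi α (algebraMap ℂ (Weyl n) (α i)) = Finsupp.single 0 (α i) := by
      rw [Algebra.algebraMap_eq_smul_one, map_smul, one_eq_WW, phi_WW']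
      have h2 : cf α (0 : Fin n →₀ ℕ) = 1 := pcoef_zero _
      rw [h2, Finsupp.smul_single]
      simp
    rw [h1, cf_single, sub_self]
    rw [← Finsupp.single_add, neg_add_cancel, Finsupp.single_zero]
  | zero => exact map_zero _
  | add x y hx hy ihx ihy => rw [map_add, ihx, ihy, add_zero]
  | smul r x hx ihx =>
    obtain ⟨R, hR⟩ := exists_intertwiner α r
    rw [smul_eq_mul, hR, ihx, map_zero]

/-- Normal pairs: disjointly supported exponents. -/
def NSet (n : ℕ) : Set ((Fin n →₀ ℕ) × (Fin n →₀ ℕ)) := {p | ∀ i, p.1 i = 0 ∨ p.2 i = 0}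

noncomputable def Nspan (n : ℕ) : Submodule ℂ (Weyl n) :=
  Submodule.span ℂ (WW '' NSet n)

lemma WW_reduction (i : Fin n) (a b : Fin n →₀ ℕ) :
    WW (a + Finsupp.single i 1, b + Finsupp.single i 1)
      = WW (a, b) * (zW n i * dW n i + algebraMap ℂ (Weyl n) (α i))
        - (α i + (b i : ℂ)) • WW (a, b) := by
  apply Subtype.ext
  have hval : (Wop a b) * (zEnd n i * dEnd n i
        + algebraMap ℂ (Module.End ℂ (MvPolynomial (Fin n) ℂ)) (α i))
      - (α i + (b i : ℂ)) • Wop a b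
      = Wop a b * (zEnd n i * dEnd n i) - (b i : ℂ) • Wop a b := by
    rw [mul_add, ← Algebra.commutes (α i) (Wop a b), ← Algebra.smul_def, add_smul]
    abel
  have hco : ((WW (a, b) * (zW n i * dW n i + algebraMap ℂ (Weyl n) (α i))
        - (α i + (b i : ℂ)) • WW (a, b) : Weyl n) : Module.End ℂ (MvPolynomial (Fin n) ℂ))
      = (Wop a b) * (zEnd n i * dEnd n i
            + algebraMap ℂ (Module.End ℂ (MvPolynomial (Fin n) ℂ)) (α i))
        - (α i + (b i : ℂ)) • Wop a b := by
    push_cast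
    rfl
  rw [hco, hval]
  exact Wop_reduction i a b

lemma WW_mem_sup : ∀ (k : ℕ) (a b : Fin n →₀ ℕ), (∑ i, min (a i) (b i)) = k →
    WW (a, b) ∈ Nspan n ⊔ (Isp n α).restrictScalars ℂ := by
  intro k
  induction k using Nat.strong_induction_on with
  | _ k ih =>
    intro a b hk
    by_cases h : ∀ i, a i = 0 ∨ b i = 0
    · exact Submodule.mem_sup_left (Submodule.subset_span ⟨(a, b), h, rfl⟩)
    · push_neg at h
      obtain ⟨i, hai, hbi⟩ := h
      set a' := a - Finsupp.single i 1 with ha'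
      set b' := b - Finsupp.single i 1 with hb'
      have hae : a = a' + Finsupp.single i 1 := by
        ext j
        rcases eq_or_ne j i with rfl | hji
        · simp only [ha', Finsupp.add_apply, Finsupp.tsub_apply, Finsupp.single_eq_same]
          omega
        · simp only [ha', Finsupp.add_apply, Finsupp.tsub_apply,
            Finsupp.single_eq_of_ne' (Ne.symm hji)]
          omega
      have hbe : b = b' + Finsupp.single i 1 := by
        ext j
        rcases eq_or_ne j i with rfl | hji
        · simp only [hb', Finsupp.add_apply, Finsupp.tsub_apply, Finsupp.single_eq_same]
          omega
        · simp only [hb', Finsupp.add_apply, Finsupp.tsub_apply,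
            Finsupp.single_eq_of_ne' (Ne.symm hji)]
          omega
      have hIg : WW (a', b') * (zW n i * dW n i + algebraMap ℂ (Weyl n) (α i))
          ∈ Isp n α := by
        have hg : (zW n i * dW n i + algebraMap ℂ (Weyl n) (α i)) ∈ Isp n α :=
          Submodule.subset_span ⟨i, rfl⟩
        simpa [smul_eq_mul] using Submodule.smul_mem (Isp n α) (WW (a', b')) hg
      have hlt : (∑ j, min (a' j) (b' j)) < k := by
        rw [← hk]
        apply Finset.sum_lt_sum
        · intro j _
          rcases eq_or_ne j i with rfl | hji
          · simp only [ha', hb', Finsupp.tsub_apply, Finsupp.single_eq_same]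
            omega
          · simp only [ha', hb', Finsupp.tsub_apply,
              Finsupp.single_eq_of_ne' (Ne.symm hji)]
            omega
        · refine ⟨i, Finset.mem_univ i, ?_⟩
          simp only [ha', hb', Finsupp.tsub_apply, Finsupp.single_eq_same]
          omega
      have hIH : WW (a', b') ∈ Nspan n ⊔ (Isp n α).restrictScalars ℂ :=
        ih _ hlt a' b' rfl
      rw [hae, hbe, WW_reduction α i a' b']
      refine sub_mem (Submodule.mem_sup_right ?_) (Submodule.smul_mem _ _ hIH)
      exact hIg
  
lemma all_mem_sup (x : Weyl n) : x ∈ Nspan n ⊔ (Isp n α).restrictScalars ℂ := by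
  have hx := WW_span x
  refine Submodule.span_le.2 ?_ hx
  rintro _ ⟨p, rfl⟩
  exact WW_mem_sup α _ p.1 p.2 rfl

lemma kappa_inj {p q : (Fin n →₀ ℕ) × (Fin n →₀ ℕ)} (hp : p ∈ NSet n) (hq : q ∈ NSet n)
    (h : emb p.1 - emb p.2 = emb q.1 - emb q.2) : p = q := by
  have hpt : ∀ j, (p.1 j : ℤ) - p.2 j = (q.1 j : ℤ) - q.2 j := by
    intro j
    have := congrArg (fun u : Fin n →₀ ℤ => u j) h
    simpa [Finsupp.sub_apply, emb_apply] using this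
  have h1 : p.1 = q.1 ∧ p.2 = q.2 := by
    constructor <;> ext j <;> (have h2 := hpt j; have h3 := hp j; have h4 := hq j; omega)
  exact Prod.ext h1.1 h1.2

set_option maxHeartbeats 4000000 in
lemma phi_inj_Nspan (hα : ∀ i : Fin n, ∀ k : ℕ, α i ≠ -(k : ℂ))
    {u : Weyl n} (hu : u ∈ Nspan n) (hphi : phi α u = 0) : u = 0 := by
  have hu' : u ∈ Submodule.span ℂ (WW '' NSet n) := hu
  obtain ⟨l, hl, rfl⟩ := (Finsupp.mem_span_image_iff_linearCombination ℂ).1 hu'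
  rw [Finsupp.mem_supported] at hl
  have hrep : phi α (Finsupp.linearCombination ℂ WW l)
      = l.sum fun p c => c • Finsupp.single (emb p.1 - emb p.2) (cf α p.2) := by
    rw [Finsupp.linearCombination_apply, map_finsuppSum]
    apply Finsupp.sum_congr
    intro p _
    rw [map_smul, phi_WW]
  have hl0 : l = 0 := by
    ext p0
    by_cases hp0 : p0 ∈ l.support
    · have hp0N : p0 ∈ NSet n := hl hp0
      have heval := congrArg (fun v : Vsp n => v (emb p0.1 - emb p0.2)) hphi
      rw [hrep] at heval
      simp only [Finsupp.coe_zero, Pi.zero_apply] at heval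
      rw [Finsupp.sum_apply] at heval
      rw [Finsupp.sum, Finset.sum_eq_single_of_mem p0 hp0] at heval
      · rw [Finsupp.smul_apply, Finsupp.single_eq_same, smul_eq_mul] at heval
        rcases mul_eq_zero.1 heval with h | h
        · exact h
        · exact absurd h (cf_ne_zero α hα p0.2)
      · intro q hq hqne
        have hqN : q ∈ NSet n := hl hq
        have hne : emb q.1 - emb q.2 ≠ emb p0.1 - emb p0.2 := by
          intro he
          exact hqne (kappa_inj hqN hp0N he)
        rw [Finsupp.smul_apply, Finsupp.single_eq_of_ne' hne, smul_zero]
    · exact Finsupp.notMem_support_iff.1 hp0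
  rw [hl0, map_zero]

set_option maxHeartbeats 4000000 in
lemma key_injectivity (hα : ∀ i : Fin n, ∀ k : ℕ, α i ≠ -(k : ℂ)) (i₀ : Fin n)
    {d : Weyl n} (hd : zW n i₀ * d ∈ Isp n α) : d ∈ Isp n α := by
  have h1 : Sh i₀ (phi α d) = 0 := by
    rw [← phi_z_mul]
    exact phi_Isp α hd
  have h2 : phi α d = 0 := by
    apply Sh_injective i₀
    rw [h1, map_zero]
  obtain ⟨u, hu, w, hw, huw⟩ := Submodule.mem_sup.1 (all_mem_sup α d)
  have hwI : w ∈ Isp n α := hw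
  have hphu : phi α u = 0 := by
    have := congrArg (phi α) huw
    rw [map_add, phi_Isp α hwI, add_zero] at this
    rw [this, h2]
  have hu0 : u = 0 := phi_inj_Nspan α hα hu hphu
  rw [← huw, hu0, zero_add]
  exact hwI

end WeylAux

/-- Let `M = D/∑ᵢ D·(zᵢ∂ᵢ + αᵢ)` with all
`αᵢ ∉ {0,−1,−2,…}`. Then for each `i`, multiplication by `zᵢ` is injective
on `M`. -/
theorem z_mul_injective_on_quotient (n : ℕ) (α : Fin n → ℂ)
    (hα : ∀ i : Fin n, ∀ k : ℕ, α i ≠ -(k : ℂ)) (i₀ : Fin n) :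
    Function.Injective
      (fun m : Weyl n ⧸ Submodule.span (Weyl n)
          (Set.range fun i => zW n i * dW n i + algebraMap ℂ (Weyl n) (α i)) =>
        zW n i₀ • m) := by
  intro m₁ m₂ h
  obtain ⟨d₁, rfl⟩ := Submodule.Quotient.mk_surjective _ m₁
  obtain ⟨d₂, rfl⟩ := Submodule.Quotient.mk_surjective _ m₂
  simp only at h
  rw [← Submodule.Quotient.mk_smul, ← Submodule.Quotient.mk_smul] at h
  have h2 : zW n i₀ • d₁ - zW n i₀ • d₂ ∈ WeylAux.Isp n α :=
    (Submodule.Quotient.eq _).1 h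
  rw [← smul_sub, smul_eq_mul] at h2
  have h3 : d₁ - d₂ ∈ WeylAux.Isp n α := WeylAux.key_injectivity α hα i₀ h2
  exact (Submodule.Quotient.eq _).2 h3
end
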